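/- arXiv:1505.00459 — 10 statements merged into one kernel-verified Lean document; each statement's English description precedes it below -/
import Mathlib

section
/- Let ‖·‖ be a URTC-norm on ℝ². If φ : ℝ² → ℝ² is a map such that for all x, y ∈ ℝ² with ‖x − y‖ = 1 one has ‖φ(x) − φ(y)‖ = 1, then φ is an affine isometry, i.e., φ is an isometry (‖φ(x) − φ(y)‖ = ‖x − y‖ for all x, y) and φ is an affine map. -/
/-- `N` is a norm on `ℝ²`. -/
structure IsNorm (N : ℝ × ℝ → ℝ) : Prop where
  add_le : ∀ x y : ℝ × ℝ, N (x + y) ≤ N x + N y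
  smul_eq : ∀ (c : ℝ) (x : ℝ × ℝ), N (c • x) = |c| * N x
  eq_zero_of : ∀ x : ℝ × ℝ, N x = 0 → x = 0

/-- `N` is a URTC-norm: for every `a b` at `N`-distance `1`, there are exactly two
points `x` with `N (a - x) = 1` and `N (b - x) = 1`. -/
def IsURTC (N : ℝ × ℝ → ℝ) : Prop :=
  ∀ a b : ℝ × ℝ, N (a - b) = 1 →
    {x : ℝ × ℝ | N (a - x) = 1 ∧ N (b - x) = 1}.encard = 2

namespace URTC

variable {N : ℝ × ℝ → ℝ} {φ : ℝ × ℝ → ℝ × ℝ}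

lemma N_zero (hN : IsNorm N) : N 0 = 0 := by
  have h := hN.smul_eq 0 0
  simpa using h

lemma N_neg (hN : IsNorm N) (x : ℝ × ℝ) : N (-x) = N x := by
  have h := hN.smul_eq (-1) x
  simpa using h

lemma N_nonneg (hN : IsNorm N) (x : ℝ × ℝ) : 0 ≤ N x := by
  have h := hN.add_le x (-x)
  simp only [add_neg_cancel, N_zero hN, N_neg hN] at h
  linarith

lemma N_pos (hN : IsNorm N) {x : ℝ × ℝ} (hx : x ≠ 0) : 0 < N x :=
  lt_of_le_of_ne (N_nonneg hN x) fun h => hx (hN.eq_zero_of x h.symm)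

lemma N_sub_rev (hN : IsNorm N) (x y : ℝ × ℝ) : N (x - y) = N (y - x) := by
  rw [show x - y = -(y - x) by abel, N_neg hN]

lemma ne_of_N_one (hN : IsNorm N) {x y : ℝ × ℝ} (h : N (x - y) = 1) : x ≠ y := by
  intro he; subst he; rw [sub_self, N_zero hN] at h; exact zero_ne_one h

lemma N_ne_zero_of_one (hN : IsNorm N) {x : ℝ × ℝ} (h : N x = 1) : x ≠ 0 := by
  intro he; subst he; rw [N_zero hN] at h; exact zero_ne_one h

lemma N_double (hN : IsNorm N) (x : ℝ × ℝ) : N (x + x) = 2 * N x := by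
  have h := hN.smul_eq 2 x
  rw [two_smul] at h
  rw [h]; norm_num

lemma N_smul_nonneg (hN : IsNorm N) {c : ℝ} (hc : 0 ≤ c) (x : ℝ × ℝ) : N (c • x) = c * N x := by
  rw [hN.smul_eq, abs_of_nonneg hc]

/-- triangle for three points -/
lemma N_tri (hN : IsNorm N) (x y z : ℝ × ℝ) : N (x - z) ≤ N (x - y) + N (y - z) := by
  have h := hN.add_le (x - y) (y - z)
  simpa using h

/-- reverse triangle -/
lemma N_rev_tri (hN : IsNorm N) (x y : ℝ × ℝ) : N x - N y ≤ N (x - y) := by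
  have h := hN.add_le (x - y) y
  simp only [sub_add_cancel] at h
  linarith

def Apex (N : ℝ × ℝ → ℝ) (a b x : ℝ × ℝ) : Prop := N (a - x) = 1 ∧ N (b - x) = 1

lemma apex_exists (hU : IsURTC N) {a b : ℝ × ℝ} (hab : N (a - b) = 1) :
    ∃ x y, x ≠ y ∧ Apex N a b x ∧ Apex N a b y := by
  obtain ⟨x, y, hxy, hset⟩ := Set.encard_eq_two.mp (hU a b hab)
  refine ⟨x, y, hxy, ?_, ?_⟩
  · have : x ∈ {x : ℝ × ℝ | N (a - x) = 1 ∧ N (b - x) = 1} := by rw [hset]; left; rfl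
    exact this
  · have : y ∈ {x : ℝ × ℝ | N (a - x) = 1 ∧ N (b - x) = 1} := by rw [hset]; right; rfl
    exact this

lemma apex_eq_or (hU : IsURTC N) {a b x y z : ℝ × ℝ} (hab : N (a - b) = 1)
    (hx : Apex N a b x) (hy : Apex N a b y) (hz : Apex N a b z) (hxy : x ≠ y) :
    z = x ∨ z = y := by
  obtain ⟨p, q, hpq, hset⟩ := Set.encard_eq_two.mp (hU a b hab)
  have hmem : ∀ {w : ℝ × ℝ}, Apex N a b w → w = p ∨ w = q := by
    intro w hw
    have : w ∈ {x : ℝ × ℝ | N (a - x) = 1 ∧ N (b - x) = 1} := hw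
    rw [hset] at this
    exact this
  rcases hmem hx with h1 | h1 <;> rcases hmem hy with h2 | h2 <;>
    rcases hmem hz with h3 | h3 <;> subst h3 <;> simp_all <;> tauto

lemma apex_sum (hN : IsNorm N) (hU : IsURTC N) {a b x y : ℝ × ℝ} (hab : N (a - b) = 1)
    (hx : Apex N a b x) (hy : Apex N a b y) (hxy : x ≠ y) : x + y = a + b := by
  have hσ : Apex N a b (a + b - x) := by
    constructor
    · rw [show a - (a + b - x) = x - b by abel, N_sub_rev hN]; exact hx.2
    · rw [show b - (a + b - x) = x - a by abel, N_sub_rev hN]; exact hx.1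
  have hne : a + b - x ≠ x := by
    intro h
    have h2 : (a - x) + (a - x) = a - b := by
      have : a + b = x + x := by
        have := congrArg (· + x) h
        simpa [sub_add_cancel] using this
      rw [show (a-x)+(a-x) = (a+a) - (x+x) by abel, ← this]; abel
    have := N_double hN (a - x)
    rw [h2, hab, hx.1] at this
    norm_num at this
  rcases apex_eq_or hU hab hx hy hσ hxy with h | h
  · exact (hne h).elim
  · rw [← h]; abel

/-- no equilateral K4 -/
lemma no_K4 (hN : IsNorm N) (hU : IsURTC N) {P Q C D : ℝ × ℝ}
    (hPQ : N (P - Q) = 1) (hPC : N (P - C) = 1) (hPD : N (P - D) = 1)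
    (hQC : N (Q - C) = 1) (hQD : N (Q - D) = 1) (hCD : N (C - D) = 1) : False := by
  have hQapex1 : Apex N P C Q := ⟨hPQ, by rw [N_sub_rev hN]; exact hQC⟩
  have hDapex1 : Apex N P C D := ⟨hPD, hCD⟩
  have hQD' : Q ≠ D := ne_of_N_one hN hQD
  have h1 : Q + D = P + C := apex_sum hN hU hPC hQapex1 hDapex1 hQD'
  have hQapex2 : Apex N P D Q := ⟨hPQ, by rw [N_sub_rev hN]; exact hQD⟩
  have hCapex2 : Apex N P D C := ⟨hPC, by rw [N_sub_rev hN]; exact hCD⟩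
  have hQC' : Q ≠ C := ne_of_N_one hN hQC
  have h2 : Q + C = P + D := apex_sum hN hU hPD hQapex2 hCapex2 hQC'
  have hDC : D + D = C + C := by
    have := congrArg₂ (· + ·) h1 h2.symm
    have h3 : Q + D + (P + D) = P + C + (Q + C) := this
    have : D + D = C + C := by
      have := congrArg (· - (Q + P)) h3
      simpa [show Q + D + (P + D) - (Q + P) = D + D by abel,
             show P + C + (Q + C) - (Q + P) = C + C by abel] using this
    exact this
  have : C = D := by
    have h4 := N_double hN (C - D)
    rw [show (C - D) + (C - D) = (C + C) - (D + D) by abel, ← hDC, sub_self, N_zero hN, hCD] at h4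
    norm_num at h4
  rw [this, sub_self, N_zero hN] at hCD
  exact zero_ne_one hCD

end URTC

section Chunk2
open Filter Topology

namespace URTC

variable {N : ℝ × ℝ → ℝ} {φ : ℝ × ℝ → ℝ × ℝ}

lemma N_le_norm (hN : IsNorm N) : ∃ C : ℝ, 0 < C ∧ ∀ x : ℝ × ℝ, N x ≤ C * ‖x‖ := by
  refine ⟨N (1,0) + N (0,1) + 1, ?_, ?_⟩
  · have h1 := N_nonneg hN (1,0); have h2 := N_nonneg hN (0,1); linarith
  · intro x
    have hx : x = x.1 • ((1:ℝ),(0:ℝ)) + x.2 • ((0:ℝ),(1:ℝ)) := by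
      ext <;> simp
    have h1 : N x ≤ N (x.1 • ((1:ℝ),(0:ℝ))) + N (x.2 • ((0:ℝ),(1:ℝ))) := by
      conv_lhs => rw [hx]
      exact hN.add_le _ _
    rw [hN.smul_eq, hN.smul_eq] at h1
    have h2 : |x.1| ≤ ‖x‖ := by
      have := norm_fst_le x; simpa [Real.norm_eq_abs] using this
    have h3 : |x.2| ≤ ‖x‖ := by
      have := norm_snd_le x; simpa [Real.norm_eq_abs] using this
    have h4 := N_nonneg hN (1,0); have h5 := N_nonneg hN (0,1)
    have h6 := norm_nonneg x
    nlinarith [abs_nonneg x.1, abs_nonneg x.2]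

lemma N_continuous (hN : IsNorm N) : Continuous N := by
  obtain ⟨C, hC, hle⟩ := N_le_norm hN
  rw [Metric.continuous_iff]
  intro x ε hε
  refine ⟨ε / C, by positivity, fun y hy => ?_⟩
  have h1 : N y - N x ≤ N (y - x) := N_rev_tri hN y x
  have h2 : N x - N y ≤ N (x - y) := N_rev_tri hN x y
  have h3 : N (y - x) ≤ C * ‖y - x‖ := hle _
  have h4 : N (x - y) ≤ C * ‖x - y‖ := hle _
  have h5 : ‖x - y‖ = ‖y - x‖ := norm_sub_rev x y
  rw [dist_eq_norm] at hy
  rw [Real.dist_eq, abs_lt]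
  constructor
  · have : C * ‖y - x‖ < C * (ε / C) := by
      apply mul_lt_mul_of_pos_left hy hC
    rw [mul_div_cancel₀ _ (ne_of_gt hC)] at this
    nlinarith
  · have : C * ‖y - x‖ < C * (ε / C) := mul_lt_mul_of_pos_left hy hC
    rw [mul_div_cancel₀ _ (ne_of_gt hC)] at this
    nlinarith

lemma N_lower (hN : IsNorm N) : ∃ c : ℝ, 0 < c ∧ ∀ x : ℝ × ℝ, c * ‖x‖ ≤ N x := by
  have hcomp : IsCompact (Metric.sphere (0:ℝ×ℝ) 1) := isCompact_sphere 0 1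
  have hne : (Metric.sphere (0:ℝ×ℝ) 1).Nonempty := by
    rw [NormedSpace.sphere_nonempty]; norm_num
  obtain ⟨x₀, hx₀, hmin⟩ := hcomp.exists_isMinOn hne ((N_continuous hN).continuousOn)
  have hx₀n : ‖x₀‖ = 1 := by rwa [mem_sphere_zero_iff_norm] at hx₀
  have hx₀ne : x₀ ≠ 0 := by
    intro h; rw [h, norm_zero] at hx₀n; exact zero_ne_one hx₀n
  refine ⟨N x₀, N_pos hN hx₀ne, ?_⟩
  intro x
  rcases eq_or_ne x 0 with rfl | hx
  · rw [norm_zero, mul_zero, N_zero hN]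
  · have hxn : (0:ℝ) < ‖x‖ := norm_pos_iff.mpr hx
    set u := ‖x‖⁻¹ • x with hu
    have huu : ‖u‖ = 1 := by
      rw [hu, norm_smul, norm_inv, norm_norm, inv_mul_cancel₀ (ne_of_gt hxn)]
    have humem : u ∈ Metric.sphere (0:ℝ×ℝ) 1 := by rwa [mem_sphere_zero_iff_norm]
    have h1 : N x₀ ≤ N u := hmin humem
    have h2 : N x = ‖x‖ * N u := by
      rw [hu, N_smul_nonneg hN (by positivity), ← mul_assoc, mul_inv_cancel₀ (ne_of_gt hxn), one_mul]
    rw [h2, mul_comm (N x₀) ‖x‖]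
    exact mul_le_mul_of_nonneg_left h1 (le_of_lt hxn)

def IsDiff (N : ℝ × ℝ → ℝ) (s : ℝ × ℝ) : Prop :=
  ∃ u w, N u = 1 ∧ Apex N 0 u w ∧ s = w + w - u

lemma apex_unit_left (hN : IsNorm N) {u w : ℝ × ℝ} (h : Apex N 0 u w) : N w = 1 := by
  have h1 := h.1; rwa [zero_sub, N_neg hN] at h1

lemma apex_compl (hN : IsNorm N) {u w : ℝ × ℝ} (h : Apex N 0 u w) : Apex N 0 u (u - w) := by
  constructor
  · rw [zero_sub, N_neg hN]; exact h.2
  · rw [show u - (u - w) = w by abel]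
    exact apex_unit_left hN h

lemma isdiff_norm_bounds (hN : IsNorm N) {s : ℝ × ℝ} (h : IsDiff N s) : 1 ≤ N s ∧ N s ≤ 2 := by
  obtain ⟨u, w, hu, hw, rfl⟩ := h
  constructor
  · have h2 : N (w + w) = 2 := by rw [N_double hN, apex_unit_left hN hw]; norm_num
    have h3 := hN.add_le (w + w - u) u
    rw [sub_add_cancel, h2, hu] at h3
    linarith
  · have h3 := hN.add_le w (w - u)
    rw [show w + (w - u) = w + w - u by abel] at h3
    rw [apex_unit_left hN hw, N_sub_rev hN w u, hw.2] at h3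
    linarith

lemma apex_translate {a b x : ℝ × ℝ} : Apex N a b x ↔ Apex N 0 (b - a) (x - a) := by
  unfold Apex
  rw [show (0:ℝ×ℝ) - (x - a) = a - x by abel, show b - a - (x - a) = b - x by abel]

lemma isdiff_of_apexes (hN : IsNorm N) (hU : IsURTC N) {a b x y : ℝ × ℝ} (hab : N (a - b) = 1)
    (hx : Apex N a b x) (hy : Apex N a b y) (hxy : x ≠ y) : IsDiff N (x - y) := by
  refine ⟨b - a, x - a, by rw [N_sub_rev hN]; exact hab, apex_translate.mp hx, ?_⟩
  have hsum := apex_sum hN hU hab hx hy hxy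
  have e : (x - a) + (x - a) - (b - a) = x + x - (a + b) := by abel
  rw [e, ← hsum]; abel

lemma pair_of_isdiff (hN : IsNorm N) {s : ℝ × ℝ} (h : IsDiff N s) (p : ℝ × ℝ) :
    ∃ c d, N (c - d) = 1 ∧ Apex N c d p ∧ Apex N c d (p + s) := by
  obtain ⟨u, w, hu, hw, rfl⟩ := h
  refine ⟨p + w - u, p + w, ?_, ⟨?_, ?_⟩, ⟨?_, ?_⟩⟩
  · rw [show p + w - u - (p + w) = -u by abel, N_neg hN]; exact hu
  · rw [show p + w - u - p = -(u - w) by abel, N_neg hN]; exact hw.2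
  · rw [show p + w - p = w by abel]; exact apex_unit_left hN hw
  · rw [show p + w - u - (p + (w + w - u)) = -w by abel, N_neg hN]; exact apex_unit_left hN hw
  · rw [show p + w - (p + (w + w - u)) = -(w - u) by abel, N_neg hN, N_sub_rev hN w u]; exact hw.2

lemma lim_const_eq {f : ℕ → ℝ} {a c : ℝ} (h : Tendsto f atTop (𝓝 a))
    (hf : ∀ n, f n = c) : a = c := by
  have h2 : Tendsto (fun _ : ℕ => c) atTop (𝓝 a) := by
    have he : f = fun _ => c := funext hf
    rwa [he] at h
  exact tendsto_nhds_unique h2 tendsto_const_nhds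

lemma apex_exists0 (hN : IsNorm N) (hU : IsURTC N) {u : ℝ × ℝ} (hu : N u = 1) :
    ∃ w, Apex N 0 u w := by
  have h0 : N ((0:ℝ×ℝ) - u) = 1 := by rw [zero_sub, N_neg hN]; exact hu
  obtain ⟨x, y, _, hx, _⟩ := apex_exists hU h0
  exact ⟨x, hx⟩

lemma apex_not_parallel (hN : IsNorm N) {u w : ℝ × ℝ} (hu : N u = 1) (hw : Apex N 0 u w) :
    ∀ r : ℝ, w ≠ r • u := by
  intro r he
  have h1 : |r| = 1 := by
    have h := hN.smul_eq r u; rw [← he, apex_unit_left hN hw, hu, mul_one] at h; exact h.symm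
  have h2 : |1 - r| = 1 := by
    have he2 : u - w = (1 - r) • u := by rw [he, sub_smul, one_smul]
    have h3 := hN.smul_eq (1 - r) u
    rw [← he2, hw.2, hu, mul_one] at h3; exact h3.symm
  rcases (abs_eq (zero_le_one)).mp h1 with h | h <;> rw [h] at h2 <;> norm_num at h2

end URTC
end Chunk2

section Chunk3
open Filter Topology

namespace URTC

variable {N : ℝ × ℝ → ℝ}

lemma key_ivt (hN : IsNorm N) (hU : IsURTC N) {s₀ : ℝ × ℝ} (p : ℝ → ℝ × ℝ)
    (hp : Continuous p) (hup : ∀ t, N (p t) = 1)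
    (h0 : ∃ w, Apex N 0 (p 0) w ∧ N (w + w - p 0 - s₀) ≤ 1)
    (h1 : ∀ w, Apex N 0 (p 1) w → 1 ≤ N (w + w - p 1 - s₀)) :
    ∃ u w, N u = 1 ∧ Apex N 0 u w ∧ N (w + w - u - s₀) = 1 := by
  classical
  obtain ⟨c₀, hc₀, hlow⟩ := N_lower hN
  set R : ℝ := c₀⁻¹ with hR
  have hball : ∀ {w : ℝ × ℝ}, N w = 1 → w ∈ Metric.closedBall (0:ℝ×ℝ) R := by
    intro w hw
    rw [Metric.mem_closedBall, dist_zero_right]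
    have h2 := hlow w; rw [hw] at h2
    rw [hR, ← mul_le_mul_iff_right₀ hc₀, mul_inv_cancel₀ (ne_of_gt hc₀)]
    exact h2
  have hNcont := N_continuous hN
  set A : Set ℝ := {t | t ∈ Set.Icc (0:ℝ) 1 ∧
    ∃ w, Apex N 0 (p t) w ∧ N (w + w - p t - s₀) ≤ 1} with hA
  have hA0 : (0:ℝ) ∈ A := ⟨⟨le_refl 0, zero_le_one⟩, h0⟩
  have hAne : A.Nonempty := ⟨0, hA0⟩
  have hAbdd : BddAbove A := ⟨1, fun t ht => ht.1.2⟩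
  set c := sSup A with hc
  have hc0 : 0 ≤ c := le_csSup hAbdd hA0
  have hc1 : c ≤ 1 := csSup_le hAne fun t ht => ht.1.2
  have hseq : ∀ n : ℕ, ∃ t, t ∈ A ∧ c - 1/(n+1) < t := by
    intro n
    have hlt : c - 1/((n:ℝ)+1) < c := by
      have hp1 : (0:ℝ) < 1/((n:ℝ)+1) := by positivity
      linarith
    obtain ⟨t, htA, htgt⟩ := exists_lt_of_lt_csSup hAne hlt
    exact ⟨t, htA, htgt⟩
  choose t htA htgt using hseq
  have htle : ∀ n, t n ≤ c := fun n => le_csSup hAbdd (htA n)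
  have honeover : Tendsto (fun n : ℕ => 1/((n:ℝ)+1)) atTop (𝓝 0) :=
    tendsto_one_div_add_atTop_nhds_zero_nat
  have htc : Tendsto t atTop (𝓝 c) := by
    apply tendsto_of_tendsto_of_tendsto_of_le_of_le
      (g := fun n : ℕ => c - 1/((n:ℝ)+1)) (h := fun _ : ℕ => c)
    · have hsub : Tendsto (fun n : ℕ => c - 1/((n:ℝ)+1)) atTop (𝓝 (c - 0)) :=
        Tendsto.sub tendsto_const_nhds honeover
      simpa using hsub
    · exact tendsto_const_nhds
    · intro n; exact le_of_lt (htgt n)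
    · exact htle
  choose w hwapex hwle using fun n => (htA n).2
  have hwball : ∀ n, w n ∈ Metric.closedBall (0:ℝ×ℝ) R :=
    fun n => hball (apex_unit_left hN (hwapex n))
  obtain ⟨w₀, _, ψ, hψ, hwconv⟩ := (isCompact_closedBall (0:ℝ×ℝ) R).tendsto_subseq hwball
  have hptψ : Tendsto (fun n => p (t (ψ n))) atTop (𝓝 (p c)) :=
    (hp.continuousAt.tendsto).comp (htc.comp hψ.tendsto_atTop)
  have hw₀apex : Apex N 0 (p c) w₀ := by
    constructor
    · have hfun : Tendsto (fun n => N ((0:ℝ×ℝ) - w (ψ n))) atTop (𝓝 (N (0 - w₀))) :=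
        (hNcont.continuousAt.tendsto).comp (tendsto_const_nhds.sub hwconv)
      exact lim_const_eq hfun (fun n => (hwapex (ψ n)).1)
    · have hfun : Tendsto (fun n => N (p (t (ψ n)) - w (ψ n))) atTop (𝓝 (N (p c - w₀))) :=
        (hNcont.continuousAt.tendsto).comp (hptψ.sub hwconv)
      exact lim_const_eq hfun (fun n => (hwapex (ψ n)).2)
  have h2 : N (w₀ + w₀ - p c - s₀) ≤ 1 := by
    have hfun : Tendsto (fun n => N (w (ψ n) + w (ψ n) - p (t (ψ n)) - s₀)) atTop
        (𝓝 (N (w₀ + w₀ - p c - s₀))) :=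
      (hNcont.continuousAt.tendsto).comp (((hwconv.add hwconv).sub hptψ).sub tendsto_const_nhds)
    exact le_of_tendsto hfun (Filter.Eventually.of_forall fun n => hwle (ψ n))
  rcases eq_or_lt_of_le hc1 with hceq | hclt
  · rw [hceq] at hw₀apex h2
    exact ⟨p 1, w₀, hup 1, hw₀apex, le_antisymm h2 (h1 w₀ hw₀apex)⟩
  · set r : ℕ → ℝ := fun n => c + (1 - c)/((n:ℝ)+1) with hr
    have hrgt : ∀ n, c < r n := by
      intro n
      have hp2 : (0:ℝ) < (1 - c)/((n:ℝ)+1) := by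
        apply div_pos (by linarith) (by positivity)
      simp only [hr]; linarith
    have hrle : ∀ n, r n ≤ 1 := by
      intro n
      have h1n : (1 - c)/((n:ℝ)+1) ≤ (1 - c) := by
        apply div_le_self (by linarith)
        have : (0:ℝ) ≤ (n:ℝ) := Nat.cast_nonneg n
        linarith
      simp only [hr]; linarith
    have hrIcc : ∀ n, r n ∈ Set.Icc (0:ℝ) 1 := fun n => ⟨by have := hrgt n; linarith, hrle n⟩
    have hrnotA : ∀ n, r n ∉ A := fun n hmem => absurd (le_csSup hAbdd hmem) (not_le.mpr (hrgt n))
    have hrbad : ∀ n, ∀ v, Apex N 0 (p (r n)) v → 1 ≤ N (v + v - p (r n) - s₀) := by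
      intro n v hv
      by_contra hle
      push_neg at hle
      exact hrnotA n ⟨hrIcc n, v, hv, le_of_lt hle⟩
    have hrex : ∀ n, ∃ v, Apex N 0 (p (r n)) v := fun n => apex_exists0 hN hU (hup (r n))
    choose v hvapex using hrex
    have hrc : Tendsto r atTop (𝓝 c) := by
      have h3 : Tendsto (fun n : ℕ => (1 - c) * (1/((n:ℝ)+1))) atTop (𝓝 ((1-c) * 0)) :=
        honeover.const_mul _
    
      have h4 : Tendsto (fun n : ℕ => c + (1 - c) * (1/((n:ℝ)+1))) atTop (𝓝 (c + (1-c)*0)) :=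
        tendsto_const_nhds.add h3
      have he : r = fun n : ℕ => c + (1 - c) * (1/((n:ℝ)+1)) := by
        funext n; simp only [hr]; ring
      rw [he]
      simpa using h4
    obtain ⟨α, _, χ, hχ, hvconv⟩ := (isCompact_closedBall (0:ℝ×ℝ) R).tendsto_subseq
      (fun n => hball (apex_unit_left hN (hvapex n)))
    have hprχ : Tendsto (fun n => p (r (χ n))) atTop (𝓝 (p c)) :=
      (hp.continuousAt.tendsto).comp (hrc.comp hχ.tendsto_atTop)
    have hαapex : Apex N 0 (p c) α := by
      constructor
      · have hfun : Tendsto (fun n => N ((0:ℝ×ℝ) - v (χ n))) atTop (𝓝 (N (0 - α))) :=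
          (hNcont.continuousAt.tendsto).comp (tendsto_const_nhds.sub hvconv)
        exact lim_const_eq hfun (fun n => (hvapex (χ n)).1)
      · have hfun : Tendsto (fun n => N (p (r (χ n)) - v (χ n))) atTop (𝓝 (N (p c - α))) :=
          (hNcont.continuousAt.tendsto).comp (hprχ.sub hvconv)
        exact lim_const_eq hfun (fun n => (hvapex (χ n)).2)
    have hαge : 1 ≤ N (α + α - p c - s₀) := by
      have hfun : Tendsto (fun n => N (v (χ n) + v (χ n) - p (r (χ n)) - s₀)) atTop
          (𝓝 (N (α + α - p c - s₀))) :=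
        (hNcont.continuousAt.tendsto).comp (((hvconv.add hvconv).sub hprχ).sub tendsto_const_nhds)
      exact ge_of_tendsto hfun (Filter.Eventually.of_forall fun n => hrbad (χ n) _ (hvapex (χ n)))
    have hβapex : Apex N 0 (p c) (p c - α) := apex_compl hN hαapex
    have hβge : 1 ≤ N ((p c - α) + (p c - α) - p c - s₀) := by
      have hv' : ∀ n, Apex N 0 (p (r (χ n))) (p (r (χ n)) - v (χ n)) :=
        fun n => apex_compl hN (hvapex (χ n))
      have hfun : Tendsto
          (fun n => N ((p (r (χ n)) - v (χ n)) + (p (r (χ n)) - v (χ n)) - p (r (χ n)) - s₀))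
          atTop (𝓝 (N ((p c - α) + (p c - α) - p c - s₀))) := by
        apply (hNcont.continuousAt.tendsto).comp
        exact (((hprχ.sub hvconv).add (hprχ.sub hvconv)).sub hprχ).sub tendsto_const_nhds
      exact ge_of_tendsto hfun (Filter.Eventually.of_forall fun n => hrbad (χ n) _ (hv' n))
    have hαβ : α ≠ p c - α := by
      intro he
      have hsum : α + α = p c := by
        have h5 := congrArg (· + α) he
        simp only [sub_add_cancel] at h5
        exact h5
      have h4 := N_double hN α
      rw [hsum, hup c, apex_unit_left hN hαapex] at h4
      norm_num at h4
    have hpc : N ((0:ℝ×ℝ) - p c) = 1 := by rw [zero_sub, N_neg hN]; exact hup c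
    rcases apex_eq_or hU hpc hαapex hβapex hw₀apex hαβ with h | h
    · exact ⟨p c, α, hup c, hαapex, le_antisymm (by rw [← h]; exact h2) hαge⟩
    · exact ⟨p c, p c - α, hup c, hβapex, le_antisymm (by rw [← h]; exact h2) hβge⟩

end URTC
end Chunk3

section Chunk4
open Filter Topology

namespace URTC

variable {N : ℝ × ℝ → ℝ}

lemma leg (hN : IsNorm N) (hU : IsURTC N) {s₀ x y : ℝ × ℝ} (hx : N x = 1) (hy : N y = 1)
    (hind : ∀ r : ℝ, y ≠ r • x)
    (hA : ∃ w, Apex N 0 x w ∧ N (w + w - x - s₀) ≤ 1)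
    (hB : ∀ w, Apex N 0 y w → 1 ≤ N (w + w - y - s₀)) :
    ∃ u w, N u = 1 ∧ Apex N 0 u w ∧ N (w + w - u - s₀) = 1 := by
  set q : ℝ → ℝ := fun t => max 0 (min 1 t) with hq
  have hq0 : q 0 = 0 := by simp [hq]
  have hq1 : q 1 = 1 := by simp [hq]
  have hqcont : Continuous q := continuous_const.max (continuous_const.min continuous_id)
  set γ : ℝ → ℝ × ℝ := fun t => (1 - q t) • x + q t • y with hγ
  have hγne : ∀ t, γ t ≠ 0 := by
    intro t h
    rcases eq_or_ne (q t) 0 with h0 | h0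
    · have : γ t = x := by simp [hγ, h0]
      rw [this] at h
      exact N_ne_zero_of_one hN hx h
    · apply hind ((q t - 1)/(q t))
      have h2 : q t • y = (q t - 1) • x := by
        have h' : (1 - q t) • x + q t • y = 0 := h
        have h3 : q t • y = -((1 - q t) • x) := eq_neg_of_add_eq_zero_right h'
        rw [h3, ← neg_smul]
        congr 1
        ring
      calc y = (q t)⁻¹ • (q t • y) := by rw [inv_smul_smul₀ h0]
        _ = (q t)⁻¹ • ((q t - 1) • x) := by rw [h2]
        _ = ((q t - 1)/(q t)) • x := by rw [smul_smul, div_eq_inv_mul]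
  have hγcont : Continuous γ := by
    apply Continuous.add
    · exact (continuous_const.sub hqcont).smul continuous_const
    · exact hqcont.smul continuous_const
  have hNγpos : ∀ t, 0 < N (γ t) := fun t => N_pos hN (hγne t)
  set pth : ℝ → ℝ × ℝ := fun t => (N (γ t))⁻¹ • γ t with hpth
  have hpcont : Continuous pth := by
    apply Continuous.smul (f := fun t => (N (γ t))⁻¹) (g := γ)
    · exact (((N_continuous hN).comp hγcont).inv₀ (fun t => ne_of_gt (hNγpos t)))
    · exact hγcont
  have hpunit : ∀ t, N (pth t) = 1 := by
    intro t
    show N ((N (γ t))⁻¹ • γ t) = 1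
    rw [N_smul_nonneg hN (le_of_lt (inv_pos.mpr (hNγpos t)))]
    exact inv_mul_cancel₀ (ne_of_gt (hNγpos t))
  have hγ0 : γ 0 = x := by simp [hγ, hq0]
  have hγ1 : γ 1 = y := by simp [hγ, hq1]
  have hp0 : pth 0 = x := by
    show (N (γ 0))⁻¹ • γ 0 = x
    rw [hγ0, hx]; simp
  have hp1 : pth 1 = y := by
    show (N (γ 1))⁻¹ • γ 1 = y
    rw [hγ1, hy]; simp
  apply key_ivt hN hU pth hpcont hpunit
  · rw [hp0]; exact hA
  · rw [hp1]; exact hB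

lemma exists_step (hN : IsNorm N) (hU : IsURTC N) {s₀ : ℝ × ℝ} (h : IsDiff N s₀) :
    ∃ s, IsDiff N s ∧ N (s - s₀) = 1 := by
  have main : ∃ u w, N u = 1 ∧ Apex N 0 u w ∧ N (w + w - u - s₀) = 1 := by
    obtain ⟨u₀, w₀, hu₀, hw₀, hs₀⟩ := h
    obtain ⟨hρ1, hρ2⟩ := isdiff_norm_bounds hN ⟨u₀, w₀, hu₀, hw₀, hs₀⟩
    set ρ := N s₀ with hρ
    have hρpos : 0 < ρ := lt_of_lt_of_le one_pos hρ1
    set η : ℝ × ℝ := ρ⁻¹ • s₀ with hη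
    have hηunit : N η = 1 := by
      rw [hη, N_smul_nonneg hN (le_of_lt (inv_pos.mpr hρpos))]
      exact inv_mul_cancel₀ (ne_of_gt hρpos)
    have hs₀η : s₀ = ρ • η := by
      rw [hη, smul_smul, mul_inv_cancel₀ (ne_of_gt hρpos), one_smul]
    have hA0 : ∃ w, Apex N 0 u₀ w ∧ N (w + w - u₀ - s₀) ≤ 1 := by
      refine ⟨w₀, hw₀, ?_⟩
      rw [show w₀ + w₀ - u₀ - s₀ = 0 by rw [hs₀]; abel, N_zero hN]
      norm_num
    have hBη : ∀ w, Apex N 0 η w → 1 ≤ N (w + w - η - s₀) := by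
      intro w hw
      have hwη : N (w - η) = 1 := by rw [N_sub_rev hN]; exact hw.2
      have hsη : N (s₀ - η) = ρ - 1 := by
        rw [hs₀η, show ρ • η - η = (ρ - 1) • η by rw [sub_smul, one_smul]]
        rw [N_smul_nonneg hN (by linarith), hηunit, mul_one]
      have hsplit : (w - η) + (w - η) = (w + w - η - s₀) + (s₀ - η) := by abel
      have htri := hN.add_le (w + w - η - s₀) (s₀ - η)
      rw [← hsplit, N_double hN, hwη, hsη] at htri
      linarith
    by_cases hpar : ∃ r : ℝ, η = r • u₀
    · obtain ⟨r, hr⟩ := hpar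
      have hrabs : |r| = 1 := by
        have h := hN.smul_eq r u₀; rw [← hr, hηunit, hu₀, mul_one] at h; exact h.symm
      rcases (abs_eq (zero_le_one)).mp hrabs with h1' | h1'
      · exfalso
        have hb := hBη w₀ (by rw [hr, h1', one_smul]; exact hw₀)
        rw [show w₀ + w₀ - η - s₀ = 0 by rw [hr, h1', one_smul, hs₀]; abel, N_zero hN] at hb
        linarith
      · have hw₀unit : N w₀ = 1 := apex_unit_left hN hw₀
        have hind1 : ∀ r' : ℝ, w₀ ≠ r' • u₀ := apex_not_parallel hN hu₀ hw₀
        by_cases hBw : ∀ w, Apex N 0 w₀ w → 1 ≤ N (w + w - w₀ - s₀)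
        · exact leg hN hU hu₀ hw₀unit hind1 hA0 hBw
        · push_neg at hBw
          obtain ⟨w', hw', hwlt⟩ := hBw
          have hind2 : ∀ r' : ℝ, η ≠ r' • w₀ := by
            intro r' he
            rcases eq_or_ne r' 0 with h0 | h0
            · rw [he, h0, zero_smul, N_zero hN] at hηunit
              exact zero_ne_one hηunit
            · apply hind1 (-r'⁻¹)
              have h3 : r' • w₀ = -u₀ := by
                rw [← he, hr, h1', neg_one_smul]
              have h4 : w₀ = r'⁻¹ • (-u₀) := by rw [← h3, inv_smul_smul₀ h0]
              rw [h4, smul_neg, ← neg_smul]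
          exact leg hN hU hw₀unit hηunit hind2 ⟨w', hw', le_of_lt hwlt⟩ hBη
    · push_neg at hpar
      exact leg hN hU hu₀ hηunit hpar hA0 hBη
  obtain ⟨u, w, hu, hw, heq⟩ := main
  exact ⟨w + w - u, ⟨u, w, hu, hw, rfl⟩, heq⟩

end URTC
end Chunk4

section Chunk5
namespace URTC

variable {N : ℝ × ℝ → ℝ} {φ : ℝ × ℝ → ℝ × ℝ}

lemma no_collapse (hN : IsNorm N) (hU : IsURTC N)
    (hφ : ∀ x y : ℝ × ℝ, N (x - y) = 1 → N (φ x - φ y) = 1)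
    {c d p q₁ : ℝ × ℝ} (hcd : N (c - d) = 1) (hp : Apex N c d p) (hq : Apex N c d q₁)
    (hpq : p ≠ q₁) : φ p ≠ φ q₁ := by
  intro heq
  have hdiff : IsDiff N (p - q₁) := isdiff_of_apexes hN hU hcd hp hq hpq
  obtain ⟨s, hsdiff, hstep⟩ := exists_step hN hU hdiff
  obtain ⟨c', d', hcd', hq', hz'⟩ := pair_of_isdiff hN hsdiff q₁
  have hzp : N ((q₁ + s) - p) = 1 := by
    rw [show (q₁ + s) - p = s - (p - q₁) by abel]
    exact hstep
  have h1 : N (φ (q₁ + s) - φ p) = 1 := hφ _ _ hzp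
  rw [heq] at h1
  apply no_K4 hN hU (P := φ q₁) (Q := φ (q₁ + s)) (C := φ c') (D := φ d')
  · rw [N_sub_rev hN]; exact h1
  · exact hφ _ _ (by rw [N_sub_rev hN]; exact hq'.1)
  · exact hφ _ _ (by rw [N_sub_rev hN]; exact hq'.2)
  · exact hφ _ _ (by rw [N_sub_rev hN]; exact hz'.1)
  · exact hφ _ _ (by rw [N_sub_rev hN]; exact hz'.2)
  · exact hφ _ _ hcd'

lemma parallelogram (hN : IsNorm N) (hU : IsURTC N)
    (hφ : ∀ x y : ℝ × ℝ, N (x - y) = 1 → N (φ x - φ y) = 1)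
    {v w : ℝ × ℝ} (hv : N v = 1) (hw : Apex N 0 v w) (a : ℝ × ℝ) :
    φ a + φ (a + v + w) = φ (a + v) + φ (a + w) := by
  have hvw : N ((a + v) - (a + w)) = 1 := by
    rw [show a + v - (a + w) = v - w by abel]; exact hw.2
  have hap : Apex N (a + v) (a + w) a := by
    constructor
    · rw [show a + v - a = v by abel]; exact hv
    · rw [show a + w - a = w by abel]; exact apex_unit_left hN hw
  have hap2 : Apex N (a + v) (a + w) (a + v + w) := by
    constructor
    · rw [show a + v - (a + v + w) = -w by abel, N_neg hN]; exact apex_unit_left hN hw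
    · rw [show a + w - (a + v + w) = -v by abel, N_neg hN]; exact hv
  have hne : a ≠ a + v + w := by
    intro h
    have h0 : v + w = 0 := by
      have h5 := congrArg (fun z => z - a) h
      simp only [sub_self] at h5
      rw [show a + v + w - a = v + w by abel] at h5
      exact h5.symm
    have hwv : w = -v := by
      have := eq_neg_of_add_eq_zero_right h0
      exact this
    have h2 := hw.2
    rw [hwv, sub_neg_eq_add, N_double hN, hv] at h2
    norm_num at h2
  have hφne := no_collapse hN hU hφ hvw hap hap2 hne
  have hiv : N (φ (a + v) - φ (a + w)) = 1 := hφ _ _ hvw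
  have hia : Apex N (φ (a+v)) (φ (a+w)) (φ a) := ⟨hφ _ _ hap.1, hφ _ _ hap.2⟩
  have hia2 : Apex N (φ (a+v)) (φ (a+w)) (φ (a + v + w)) := ⟨hφ _ _ hap2.1, hφ _ _ hap2.2⟩
  exact apex_sum hN hU hiv hia hia2 hφne

lemma double_step (hN : IsNorm N) (hU : IsURTC N)
    (hφ : ∀ x y : ℝ × ℝ, N (x - y) = 1 → N (φ x - φ y) = 1)
    {v : ℝ × ℝ} (hv : N v = 1) (a : ℝ × ℝ) :
    φ (a + v + v) + φ a = φ (a + v) + φ (a + v) := by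
  obtain ⟨w, hw⟩ := apex_exists0 hN hU hv
  have h1 := parallelogram hN hU hφ hv hw a
  have hw' : Apex N 0 v (v - w) := apex_compl hN hw
  have h2 := parallelogram hN hU hφ hv hw' (a + w)
  rw [show a + w + v + (v - w) = a + v + v by abel, show a + w + (v - w) = a + v by abel,
      show a + w + v = a + v + w by abel] at h2
  linear_combination h1 + h2

lemma line_diff (hN : IsNorm N) (hU : IsURTC N)
    (hφ : ∀ x y : ℝ × ℝ, N (x - y) = 1 → N (φ x - φ y) = 1)
    {v : ℝ × ℝ} (hv : N v = 1) (a : ℝ × ℝ) :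
    ∀ n : ℕ, φ (a + n • v + v) - φ (a + n • v) = φ (a + v) - φ a := by
  intro n
  induction n with
  | zero => simp
  | succ n ih =>
    have hstep := double_step hN hU hφ hv (a + n • v)
    have he : a + (n+1) • v = a + n • v + v := by rw [succ_nsmul]; abel
    rw [he]
    linear_combination hstep + ih

lemma line_affine (hN : IsNorm N) (hU : IsURTC N)
    (hφ : ∀ x y : ℝ × ℝ, N (x - y) = 1 → N (φ x - φ y) = 1)
    {v : ℝ × ℝ} (hv : N v = 1) (a : ℝ × ℝ) :
    ∀ n : ℕ, φ (a + n • v) = φ a + n • (φ (a + v) - φ a) := by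
  intro n
  induction n with
  | zero => simp
  | succ n ih =>
    have hd := line_diff hN hU hφ hv a n
    have he : a + (n+1) • v = a + n • v + v := by rw [succ_nsmul]; abel
    rw [he, succ_nsmul]
    have : φ (a + n • v + v) = φ (a + n • v) + (φ (a + v) - φ a) := by
      linear_combination hd
    rw [this, ih]
    abel

end URTC
end Chunk5

section Chunk6
open Set
namespace URTC

variable {N : ℝ × ℝ → ℝ} {φ : ℝ × ℝ → ℝ × ℝ}

lemma two_units (hN : IsNorm N) (hU : IsURTC N) {z : ℝ × ℝ} (hz : z ≠ 0) (h2 : N z ≤ 2) :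
    ∃ u₁ u₂, N u₁ = 1 ∧ N u₂ = 1 ∧ z = u₁ + u₂ := by
  have hdpos : 0 < N z := N_pos hN hz
  set d := N z with hd
  set u₀ : ℝ × ℝ := d⁻¹ • z with hu₀
  have hu₀unit : N u₀ = 1 := by
    rw [hu₀, N_smul_nonneg hN (le_of_lt (inv_pos.mpr hdpos))]
    exact inv_mul_cancel₀ (ne_of_gt hdpos)
  have hzdu : z = d • u₀ := by
    rw [hu₀, smul_smul, mul_inv_cancel₀ (ne_of_gt hdpos), one_smul]
  obtain ⟨ξ, hξ⟩ := apex_exists0 hN hU hu₀unit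
  have hξind : ∀ r : ℝ, ξ ≠ r • u₀ := apex_not_parallel hN hu₀unit hξ
  set q : ℝ → ℝ := fun t => max 0 (min 1 t) with hq
  have hq0 : q 0 = 0 := by simp [hq]
  have hq1 : q 1 = 1 := by simp [hq]
  have hqmem : ∀ t, 0 ≤ q t ∧ q t ≤ 1 := fun t =>
    ⟨le_max_left _ _, max_le zero_le_one (min_le_left _ _)⟩
  have hqcont : Continuous q := continuous_const.max (continuous_const.min continuous_id)
  set γ : ℝ → ℝ × ℝ := fun t => (1 - 2 * q t) • u₀ + (q t * (1 - q t)) • ξ with hγ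
  have hγne : ∀ t, γ t ≠ 0 := by
    intro t h
    rcases eq_or_ne (q t * (1 - q t)) 0 with h0 | h0
    · have hcoef : 1 - 2 * q t = 1 ∨ 1 - 2 * q t = -1 := by
        rcases mul_eq_zero.mp h0 with h' | h'
        · left; rw [h']; ring
        · right; have : q t = 1 := by linarith
          rw [this]; ring
      have hγt : γ t = (1 - 2 * q t) • u₀ := by
        show (1 - 2 * q t) • u₀ + (q t * (1 - q t)) • ξ = _
        rw [h0, zero_smul, add_zero]
      rw [hγt] at h
      rcases hcoef with h' | h' <;> rw [h'] at h
      · rw [one_smul] at h; exact N_ne_zero_of_one hN hu₀unit h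
      · rw [neg_one_smul, neg_eq_zero] at h; exact N_ne_zero_of_one hN hu₀unit h
    · apply hξind ((2 * q t - 1)/(q t * (1 - q t)))
      have h' : (1 - 2 * q t) • u₀ + (q t * (1 - q t)) • ξ = 0 := h
      have h3 : (q t * (1 - q t)) • ξ = -((1 - 2 * q t) • u₀) := eq_neg_of_add_eq_zero_right h'
      calc ξ = (q t * (1 - q t))⁻¹ • ((q t * (1 - q t)) • ξ) := by rw [inv_smul_smul₀ h0]
        _ = (q t * (1 - q t))⁻¹ • (-((1 - 2 * q t) • u₀)) := by rw [h3]
        _ = ((2 * q t - 1)/(q t * (1 - q t))) • u₀ := by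
            rw [smul_neg, smul_smul, ← neg_smul]
            congr 1
            field_simp
            ring
  have hγcont : Continuous γ := by
    apply Continuous.add
    · exact (continuous_const.sub (continuous_const.mul hqcont)).smul continuous_const
    · exact (hqcont.mul (continuous_const.sub hqcont)).smul continuous_const
  have hNγpos : ∀ t, 0 < N (γ t) := fun t => N_pos hN (hγne t)
  set pth : ℝ → ℝ × ℝ := fun t => (N (γ t))⁻¹ • γ t with hpth
  have hpcont : Continuous pth :=
    Continuous.smul (((N_continuous hN).comp hγcont).inv₀ fun t => ne_of_gt (hNγpos t)) hγcont
  have hpunit : ∀ t, N (pth t) = 1 := by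
    intro t
    show N ((N (γ t))⁻¹ • γ t) = 1
    rw [N_smul_nonneg hN (le_of_lt (inv_pos.mpr (hNγpos t)))]
    exact inv_mul_cancel₀ (ne_of_gt (hNγpos t))
  have hγ0 : γ 0 = u₀ := by show (1 - 2 * q 0) • u₀ + (q 0 * (1 - q 0)) • ξ = u₀; rw [hq0]; simp
  have hγ1 : γ 1 = -u₀ := by
    show (1 - 2 * q 1) • u₀ + (q 1 * (1 - q 1)) • ξ = -u₀
    rw [hq1]; norm_num
  have hp0 : pth 0 = u₀ := by
    show (N (γ 0))⁻¹ • γ 0 = u₀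
    rw [hγ0, hu₀unit]; simp
  have hp1 : pth 1 = -u₀ := by
    show (N (γ 1))⁻¹ • γ 1 = -u₀
    rw [hγ1, N_neg hN, hu₀unit]; simp
  set f : ℝ → ℝ := fun t => N (z - pth t) with hf
  have hfcont : ContinuousOn f (Icc 0 1) :=
    ((N_continuous hN).comp (continuous_const.sub hpcont)).continuousOn
  have hf0 : f 0 ≤ 1 := by
    show N (z - pth 0) ≤ 1
    rw [hp0, hzdu, show d • u₀ - u₀ = (d - 1) • u₀ by rw [sub_smul, one_smul]]
    rw [hN.smul_eq, hu₀unit, mul_one]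
    rw [abs_le]
    constructor <;> linarith
  have hf1 : 1 ≤ f 1 := by
    show 1 ≤ N (z - pth 1)
    rw [hp1, sub_neg_eq_add, hzdu, show d • u₀ + u₀ = (d + 1) • u₀ by rw [add_smul, one_smul]]
    rw [hN.smul_eq, hu₀unit, mul_one, abs_of_pos (by linarith)]
    linarith
  have hmem : (1:ℝ) ∈ Icc (f 0) (f 1) := ⟨hf0, hf1⟩
  obtain ⟨t, _, hft⟩ := intermediate_value_Icc zero_le_one hfcont hmem
  refine ⟨pth t, z - pth t, hpunit t, hft, by abel⟩

lemma decomp_aux (hN : IsNorm N) (hU : IsURTC N) : ∀ n : ℕ, ∀ z : ℝ × ℝ, N z ≤ n + 2 →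
    ∃ l : List (ℝ × ℝ), (∀ u ∈ l, N u = 1) ∧ l.sum = z ∧ (l.length : ℝ) ≤ N z + 2 := by
  intro n
  induction n with
  | zero =>
    intro z hz
    rcases eq_or_ne z 0 with rfl | hne
    · refine ⟨[], by simp, by simp, ?_⟩
      simp [N_zero hN]
    · obtain ⟨u₁, u₂, h1, h2, h3⟩ := two_units hN hU hne (by simpa using hz)
      refine ⟨[u₁, u₂], ?_, ?_, ?_⟩
      · intro u hu
        rcases List.mem_cons.mp hu with rfl | hu'
        · exact h1
        · rcases List.mem_cons.mp hu' with rfl | hu''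
          · exact h2
          · simp at hu''
      · simp [h3]
      · have := N_nonneg hN z
        simp only [List.length_cons, List.length_nil]
        push_cast
        linarith
  | succ n ih =>
    intro z hz
    by_cases hle : N z ≤ n + 2
    · exact ih z hle
    · push_neg at hle
      have hzne : z ≠ 0 := by
        intro h
        rw [h, N_zero hN] at hle
        have : (0:ℝ) ≤ n := Nat.cast_nonneg n
        linarith
      have hdpos : 0 < N z := N_pos hN hzne
      set u₀ : ℝ × ℝ := (N z)⁻¹ • z with hu₀
      have hu₀unit : N u₀ = 1 := by
        rw [hu₀, N_smul_nonneg hN (le_of_lt (inv_pos.mpr hdpos))]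
        exact inv_mul_cancel₀ (ne_of_gt hdpos)
      have hzdu : z = (N z) • u₀ := by
        rw [hu₀, smul_smul, mul_inv_cancel₀ (ne_of_gt hdpos), one_smul]
      set z' := z - u₀ with hz'def
      have hz'norm : N z' = N z - 1 := by
        rw [hz'def]
        conv_lhs => rw [hzdu]
        rw [show (N z) • u₀ - u₀ = (N z - 1) • u₀ by rw [sub_smul, one_smul]]
        rw [hN.smul_eq, hu₀unit, mul_one, abs_of_pos (by linarith)]
      have hz'le : N z' ≤ n + 2 := by
        rw [hz'norm]
        push_cast at hz ⊢
        linarith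
      obtain ⟨l, hl, hsum, hlen⟩ := ih z' hz'le
      refine ⟨u₀ :: l, ?_, ?_, ?_⟩
      · intro u hu
        rcases List.mem_cons.mp hu with rfl | hu'
        · exact hu₀unit
        · exact hl u hu'
      · rw [List.sum_cons, hsum, hz'def]; abel
      · rw [List.length_cons]
        push_cast
        rw [hz'norm] at hlen
        linarith

lemma decomp (hN : IsNorm N) (hU : IsURTC N) (z : ℝ × ℝ) :
    ∃ l : List (ℝ × ℝ), (∀ u ∈ l, N u = 1) ∧ l.sum = z ∧ (l.length : ℝ) ≤ N z + 2 := by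
  apply decomp_aux hN hU ⌈N z⌉₊ z
  have h1 := Nat.le_ceil (N z)
  linarith

lemma chain (hN : IsNorm N)
    (hφ : ∀ x y : ℝ × ℝ, N (x - y) = 1 → N (φ x - φ y) = 1) :
    ∀ l : List (ℝ × ℝ), (∀ u ∈ l, N u = 1) →
      ∀ x, N (φ x - φ (x + l.sum)) ≤ l.length := by
  intro l
  induction l with
  | nil =>
    intro _ x
    simp [N_zero hN]
  | cons u l ih =>
    intro hul x
    have h1 : N (φ x - φ (x + u)) = 1 := by
      apply hφ
      rw [show x - (x + u) = -u by abel, N_neg hN]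
      exact hul u List.mem_cons_self
    have h2 := ih (fun v hv => hul v (List.mem_cons_of_mem _ hv)) (x + u)
    have h3 := N_tri hN (φ x) (φ (x + u)) (φ (x + u + l.sum))
    rw [show x + (u :: l).sum = x + u + l.sum by rw [List.sum_cons]; abel]
    rw [h1] at h3
    calc N (φ x - φ (x + u + l.sum)) ≤ 1 + N (φ (x + u) - φ (x + u + l.sum)) := h3
    _ ≤ 1 + l.length := by linarith
    _ = ((u :: l).length : ℝ) := by rw [List.length_cons]; push_cast; ring

lemma g_const (hN : IsNorm N) (hU : IsURTC N)
    (hφ : ∀ x y : ℝ × ℝ, N (x - y) = 1 → N (φ x - φ y) = 1)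
    {v : ℝ × ℝ} (hv : N v = 1) (a b : ℝ × ℝ) :
    φ (a + v) - φ a = φ (b + v) - φ b := by
  by_contra hne
  set g := φ (a + v) - φ a with hg
  set g' := φ (b + v) - φ b with hg'
  have hgg : g - g' ≠ 0 := sub_ne_zero_of_ne hne
  have hpos : 0 < N (g - g') := N_pos hN hgg
  obtain ⟨l, hl, hsum, _⟩ := decomp hN hU (b - a)
  have hb : b = a + l.sum := by rw [hsum]; abel
  have hbound : ∀ n : ℕ, N (φ (a + n • v) - φ (b + n • v)) ≤ l.length := by
    intro n
    have h := chain hN hφ l hl (a + n • v)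
    rw [show a + n • v + l.sum = b + n • v by rw [hb]; abel] at h
    exact h
  have key : ∀ n : ℕ, (n : ℝ) * N (g - g') ≤ l.length + N (φ a - φ b) := by
    intro n
    have h1 := hbound n
    rw [line_affine hN hU hφ hv a n, line_affine hN hU hφ hv b n] at h1
    have he : φ a + n • (φ (a + v) - φ a) - (φ b + n • (φ (b + v) - φ b)) =
        (φ a - φ b) + n • (g - g') := by
      rw [hg, hg']; simp only [smul_sub]; abel
    rw [he] at h1
    have h2 : N (n • (g - g')) - N ((φ a - φ b) + n • (g - g')) ≤ N (φ a - φ b) := by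
      have h3 := N_rev_tri hN (n • (g - g')) ((φ a - φ b) + n • (g - g'))
      rw [show n • (g - g') - ((φ a - φ b) + n • (g - g')) = -(φ a - φ b) by abel,
          N_neg hN] at h3
      exact h3
    have h3 : N (n • (g - g')) = n * N (g - g') := by
      rw [← Nat.cast_smul_eq_nsmul ℝ, N_smul_nonneg hN (Nat.cast_nonneg n)]
    linarith
  obtain ⟨n, hn⟩ := exists_nat_gt (((l.length : ℝ) + N (φ a - φ b)) / N (g - g'))
  have hk := key n
  rw [div_lt_iff₀ hpos] at hn
  linarith

lemma shift_list (hN : IsNorm N) (hU : IsURTC N)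
    (hφ : ∀ x y : ℝ × ℝ, N (x - y) = 1 → N (φ x - φ y) = 1) :
    ∀ l : List (ℝ × ℝ), (∀ u ∈ l, N u = 1) →
      ∀ x, φ (x + l.sum) - φ x = φ l.sum - φ 0 := by
  intro l
  induction l with
  | nil => intro _ x; simp
  | cons u l ih =>
    intro hul x
    have hu1 : N u = 1 := hul u List.mem_cons_self
    have hlu : ∀ v ∈ l, N v = 1 := fun v hv => hul v (List.mem_cons_of_mem _ hv)
    have e1 : x + (u :: l).sum = x + u + l.sum := by rw [List.sum_cons]; abel
    have e2 : (u :: l).sum = 0 + u + l.sum := by rw [List.sum_cons]; abel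
    rw [e1, e2]
    have h1 := ih hlu (x + u)
    have h4 := ih hlu (0 + u)
    have h2 : φ (x + u) - φ x = φ (0 + u) - φ 0 := g_const hN hU hφ hu1 x 0
    linear_combination h1 - h4 + h2

lemma shift (hN : IsNorm N) (hU : IsURTC N)
    (hφ : ∀ x y : ℝ × ℝ, N (x - y) = 1 → N (φ x - φ y) = 1) (z x : ℝ × ℝ) :
    φ (x + z) - φ x = φ z - φ 0 := by
  obtain ⟨l, hl, hsum, _⟩ := decomp hN hU z
  have h := shift_list hN hU hφ l hl x
  rw [hsum] at h
  exact h

end URTC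
end Chunk6

/-- If `N` is a URTC-norm on `ℝ²` and `φ` preserves unit distance,
then `φ` is an affine isometry. -/
theorem aleksandrov_URTC (N : ℝ × ℝ → ℝ) (hN : IsNorm N) (hU : IsURTC N)
    (φ : ℝ × ℝ → ℝ × ℝ)
    (hφ : ∀ x y : ℝ × ℝ, N (x - y) = 1 → N (φ x - φ y) = 1) :
    (∀ x y : ℝ × ℝ, N (φ x - φ y) = N (x - y)) ∧
      ∃ (L : (ℝ × ℝ) →ₗ[ℝ] (ℝ × ℝ)) (t : ℝ × ℝ), ∀ x : ℝ × ℝ, φ x = L x + t := by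
  classical
  open URTC in
  set Δ : ℝ × ℝ → ℝ × ℝ := fun x => φ x - φ 0 with hΔdef
  have hshift : ∀ z x : ℝ × ℝ, φ (x + z) - φ x = Δ z := fun z x => URTC.shift hN hU hφ z x
  have hadd : ∀ x y, Δ (x + y) = Δ x + Δ y := by
    intro x y
    have h1 := hshift y x
    show φ (x + y) - φ 0 = (φ x - φ 0) + (φ y - φ 0)
    have h2 : φ (x + y) - φ x = φ y - φ 0 := h1
    linear_combination h2
  have hΔ0 : Δ 0 = 0 := by show φ 0 - φ 0 = 0; simp
  have hΔneg : ∀ x, Δ (-x) = -Δ x := by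
    intro x
    have h := hadd x (-x)
    rw [add_neg_cancel, hΔ0] at h
    have h2 : Δ x + Δ (-x) = 0 := h.symm
    exact eq_neg_of_add_eq_zero_right h2
  have hΔsub : ∀ x y, Δ (x - y) = Δ x - Δ y := by
    intro x y
    rw [sub_eq_add_neg, hadd, hΔneg, ← sub_eq_add_neg]
  have hnsmul : ∀ (n : ℕ) (x : ℝ × ℝ), Δ ((n : ℝ) • x) = (n : ℝ) • Δ x := by
    intro n
    induction n with
    | zero => intro x; simp [hΔ0]
    | succ n ih =>
      intro x
      push_cast
      rw [add_smul, one_smul, hadd, ih, add_smul, one_smul]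
  have hzsmul : ∀ (m : ℤ) (x : ℝ × ℝ), Δ ((m : ℝ) • x) = (m : ℝ) • Δ x := by
    intro m x
    obtain ⟨n, rfl | rfl⟩ := m.eq_nat_or_neg
    · push_cast
      exact hnsmul n x
    · push_cast
      rw [neg_smul, hΔneg, hnsmul, neg_smul]
  have hunit : ∀ u : ℝ × ℝ, N u = 1 → N (Δ u) = 1 := by
    intro u hu
    show N (φ u - φ 0) = 1
    exact hφ u 0 (by rw [sub_zero]; exact hu)
  have hlip0 : ∀ z, N (Δ z) ≤ N z + 2 := by
    intro z
    obtain ⟨l, hl, hsum, hlen⟩ := URTC.decomp hN hU z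
    have h := URTC.chain hN hφ l hl 0
    rw [hsum, zero_add] at h
    have h2 : N (φ 0 - φ z) = N (Δ z) := by
      rw [URTC.N_sub_rev hN]
    linarith
  have hlip : ∀ z, N (Δ z) ≤ N z := by
    intro z
    by_contra hlt
    push_neg at hlt
    have hdpos : 0 < N (Δ z) - N z := by linarith
    obtain ⟨n, hn⟩ := exists_nat_gt (2 / (N (Δ z) - N z))
    have hnpos : 0 < (n : ℝ) := lt_trans (by positivity) hn
    have h1 := hlip0 ((n : ℝ) • z)
    rw [hnsmul n z, URTC.N_smul_nonneg hN (Nat.cast_nonneg n),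
        URTC.N_smul_nonneg hN (Nat.cast_nonneg n)] at h1
    rw [div_lt_iff₀ hdpos] at hn
    nlinarith
  have hqsmul : ∀ (q : ℚ) (x : ℝ × ℝ), Δ ((q : ℝ) • x) = (q : ℝ) • Δ x := by
    intro q x
    have hdenpos : (0 : ℝ) < (q.den : ℝ) := by exact_mod_cast q.pos
    have hden : ((q.den : ℝ)) ≠ 0 := ne_of_gt hdenpos
    have hmul : (q.den : ℝ) * (q : ℝ) = (q.num : ℝ) := by
      rw [Rat.cast_def]
      field_simp
    have hkey : (q.den : ℝ) • Δ ((q : ℝ) • x) = (q.den : ℝ) • ((q : ℝ) • Δ x) := by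
      rw [← hnsmul q.den, smul_smul, smul_smul, hmul, hzsmul]
    exact smul_right_injective (ℝ × ℝ) hden hkey
  have hsmul : ∀ (r : ℝ) (x : ℝ × ℝ), Δ (r • x) = r • Δ x := by
    intro r x
    have hdiff : ∀ ε : ℝ, 0 < ε → N (Δ (r • x) - r • Δ x) ≤ ε * (N x + N (Δ x)) := by
      intro ε hε
      obtain ⟨q, hq⟩ := exists_rat_near r hε
      have h1 : N (Δ (r • x) - Δ ((q : ℝ) • x)) ≤ N (r • x - (q : ℝ) • x) := by
        rw [← hΔsub]
        exact hlip _
      have h2 : N (r • x - (q : ℝ) • x) = |r - (q : ℝ)| * N x := by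
        rw [← sub_smul, hN.smul_eq]
      have h3 : N ((q : ℝ) • Δ x - r • Δ x) = |(q : ℝ) - r| * N (Δ x) := by
        rw [← sub_smul, hN.smul_eq]
      rw [hqsmul q x] at h1
      have htri := URTC.N_tri hN (Δ (r • x)) ((q : ℝ) • Δ x) (r • Δ x)
      have habs : |(q : ℝ) - r| = |r - (q : ℝ)| := abs_sub_comm _ _
      have hN1 := URTC.N_nonneg hN x
      have hN2 := URTC.N_nonneg hN (Δ x)
      have hqlt : |r - (q : ℝ)| ≤ ε := le_of_lt hq
      calc N (Δ (r • x) - r • Δ x) ≤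
          N (Δ (r • x) - (q : ℝ) • Δ x) + N ((q : ℝ) • Δ x - r • Δ x) := htri
        _ ≤ |r - (q : ℝ)| * N x + |r - (q : ℝ)| * N (Δ x) := by
            rw [h3, habs]
            rw [h2] at h1
            linarith
        _ ≤ ε * (N x + N (Δ x)) := by nlinarith [abs_nonneg (r - (q : ℝ))]
    have hzero : N (Δ (r • x) - r • Δ x) = 0 := by
      by_contra hne
      have hpos : 0 < N (Δ (r • x) - r • Δ x) :=
        lt_of_le_of_ne (URTC.N_nonneg hN _) (Ne.symm hne)
      set M := N x + N (Δ x) with hM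
      have hMnn : 0 ≤ M := by
        have := URTC.N_nonneg hN x; have := URTC.N_nonneg hN (Δ x); rw [hM]; linarith
      have h := hdiff (N (Δ (r • x) - r • Δ x) / (2 * (M + 1))) (by positivity)
      have hMlt : N (Δ (r • x) - r • Δ x) / (2 * (M + 1)) * (N x + N (Δ x)) <
          N (Δ (r • x) - r • Δ x) := by
        rw [div_mul_eq_mul_div, div_lt_iff₀ (by positivity)]
        nlinarith
      linarith
    have := hN.eq_zero_of _ hzero
    exact sub_eq_zero.mp this
  set L : (ℝ × ℝ) →ₗ[ℝ] (ℝ × ℝ) :=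
    { toFun := Δ
      map_add' := hadd
      map_smul' := fun r x => hsmul r x } with hL
  have hφeq : ∀ x, φ x = Δ x + φ 0 := by
    intro x
    show φ x = (φ x - φ 0) + φ 0
    abel
  constructor
  · intro x y
    have he : φ x - φ y = Δ (x - y) := by
      have h := hshift (x - y) y
      rw [show y + (x - y) = x by abel] at h
      exact h
    rw [he]
    rcases eq_or_ne x y with rfl | hne
    · rw [sub_self, hΔ0]
    · have hd : 0 < N (x - y) := URTC.N_pos hN (sub_ne_zero_of_ne hne)
      set u : ℝ × ℝ := (N (x - y))⁻¹ • (x - y) with hu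
      have huunit : N u = 1 := by
        rw [hu, URTC.N_smul_nonneg hN (le_of_lt (inv_pos.mpr hd))]
        exact inv_mul_cancel₀ (ne_of_gt hd)
      have hxy : x - y = (N (x - y)) • u := by
        rw [hu, smul_smul, mul_inv_cancel₀ (ne_of_gt hd), one_smul]
      conv_lhs => rw [hxy]
      rw [hsmul, URTC.N_smul_nonneg hN (le_of_lt hd), hunit u huunit, mul_one]
  · exact ⟨L, φ 0, fun x => hφeq x⟩
end

section
/- Let ‖·‖ be a norm on ℝ² with unit sphere S. If there exist c, d ∈ S with ‖c − d‖ > 1 such that the segment [c, d] is contained in S, then ‖·‖ is not a URTC-norm. -/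
/-- If the unit sphere of `N` contains a segment whose endpoints are at distance `> 1`,
then `N` is not a URTC-norm. -/
theorem not_URTC_of_long_segment (N : ℝ × ℝ → ℝ) (hN : IsNorm N)
    (c d : ℝ × ℝ) (hc : N c = 1) (hd : N d = 1) (hcd : 1 < N (c - d))
    (hseg : segment ℝ c d ⊆ {x : ℝ × ℝ | N x = 1}) :
    ¬ IsURTC N := by
  intro h
  set L := N (c - d) with hL
  have hL0 : 0 < L := lt_trans one_pos hcd
  have hNneg : ∀ x : ℝ × ℝ, N (-x) = N x := by
    intro x
    have := hN.smul_eq (-1) x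
    simpa using this
  set u := L⁻¹ • (c - d) with hu
  have hNu : N u = 1 := by
    rw [hu, hN.smul_eq, abs_of_pos (inv_pos.mpr hL0), ← hL, inv_mul_cancel₀ hL0.ne']
  have hN0u : N ((0:ℝ×ℝ) - u) = 1 := by
    rw [zero_sub, hNneg, hNu]
  have hcd' : c ≠ d := by
    intro hcd2
    have hz : L = 0 := by
      rw [hL, hcd2, sub_self]
      simpa using hN.smul_eq 0 0
    rw [hz] at hcd
    linarith
  -- every x_t = c + t • (d - c) for t ∈ [0, 1 - L⁻¹] is a witness
  have hsegmem : ∀ t ∈ Set.Icc (0:ℝ) 1, N (c + t • (d - c)) = 1 := by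
    intro t ht
    apply hseg
    rw [segment_eq_image']
    exact ⟨t, ht, rfl⟩
  have hIcc : (Set.Icc (0:ℝ) (1 - L⁻¹)).Infinite := by
    apply Set.Icc_infinite
    have : L⁻¹ < 1 := by
      rw [inv_lt_one_iff₀]; right; linarith
    linarith
  have key : ∀ t ∈ Set.Icc (0:ℝ) (1 - L⁻¹),
      (c + t • (d - c)) ∈ {x : ℝ×ℝ | N ((0:ℝ×ℝ) - x) = 1 ∧ N (u - x) = 1} := by
    intro t ht
    have hLinv : 0 < L⁻¹ := inv_pos.mpr hL0
    have ht1 : t ∈ Set.Icc (0:ℝ) 1 := ⟨ht.1, by linarith [ht.2]⟩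
    constructor
    · rw [zero_sub, hNneg]
      exact hsegmem t ht1
    · have heq : u - (c + t • (d - c)) = -(c + (t + L⁻¹) • (d - c)) := by
        rw [hu]
        have : L⁻¹ • (c - d) = -(L⁻¹ • (d - c)) := by
          rw [← smul_neg, neg_sub]
        rw [this, add_smul]
        abel
      rw [heq, hNneg]
      exact hsegmem (t + L⁻¹) ⟨by linarith [ht.1, hLinv.le], by linarith [ht.2]⟩
  have hinj : Set.InjOn (fun t : ℝ => c + t • (d - c)) (Set.Icc (0:ℝ) (1 - L⁻¹)) := by
    intro s _ t _ hst
    simp only [add_right_inj] at hst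
    have hdc : d - c ≠ 0 := sub_ne_zero.mpr (Ne.symm hcd')
    by_contra hne
    exact hdc (by
      have : (s - t) • (d - c) = 0 := by
        rw [sub_smul, hst, sub_self]
      rcases smul_eq_zero.mp this with h1 | h2
      · exact absurd (sub_eq_zero.mp h1) hne
      · exact h2)
  have hinf : {x : ℝ×ℝ | N ((0:ℝ×ℝ) - x) = 1 ∧ N (u - x) = 1}.Infinite := by
    refine (Set.Infinite.image hinj hIcc).mono ?_
    rintro x ⟨t, ht, rfl⟩
    exact key t ht
  have := h 0 u hN0u
  rw [hinf.encard_eq] at this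
  exact absurd this (by simp)
end

section
/- Let ‖·‖ be a norm on ℝ² with unit sphere S. If ‖·‖ is not a URTC-norm, then there exist c, d ∈ S with ‖c − d‖ > 1 such that the segment [c, d] is contained in S. -/
namespace URTCaux

variable {N : ℝ × ℝ → ℝ}

lemma N_zero (hN : IsNorm N) : N 0 = 0 := by
  have := hN.smul_eq 0 0
  simpa using this

lemma N_neg (hN : IsNorm N) (x : ℝ × ℝ) : N (-x) = N x := by
  have := hN.smul_eq (-1) x
  simpa using this

lemma N_nonneg (hN : IsNorm N) (x : ℝ × ℝ) : 0 ≤ N x := by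
  have h1 := hN.add_le x (-x)
  rw [add_neg_cancel, N_zero hN, N_neg hN] at h1
  linarith

lemma N_pos (hN : IsNorm N) {x : ℝ × ℝ} (hx : x ≠ 0) : 0 < N x := by
  rcases lt_or_eq_of_le (N_nonneg hN x) with h | h
  · exact h
  · exact absurd (hN.eq_zero_of x h.symm) hx

lemma N_sub_le (hN : IsNorm N) (x y : ℝ × ℝ) : N x - N y ≤ N (x - y) := by
  have := hN.add_le (x - y) y
  simp only [sub_add_cancel] at this
  linarith

lemma N_continuous (hN : IsNorm N) : Continuous N := by
  have key : ∀ z : ℝ × ℝ, N z ≤ (N (1,0) + N (0,1)) * ‖z‖ := by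
    intro z
    have hz : z = z.1 • ((1:ℝ),(0:ℝ)) + z.2 • ((0:ℝ),(1:ℝ)) := by
      rw [Prod.ext_iff]; simp
    calc N z = N (z.1 • ((1:ℝ),(0:ℝ)) + z.2 • ((0:ℝ),(1:ℝ))) := by rw [← hz]
      _ ≤ N (z.1 • ((1:ℝ),(0:ℝ))) + N (z.2 • ((0:ℝ),(1:ℝ))) := hN.add_le _ _
      _ = |z.1| * N (1,0) + |z.2| * N (0,1) := by rw [hN.smul_eq, hN.smul_eq]
      _ ≤ ‖z‖ * N (1,0) + ‖z‖ * N (0,1) := by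
          have h1 : |z.1| ≤ ‖z‖ := by
            rw [Prod.norm_def]; exact le_max_of_le_left (le_of_eq (Real.norm_eq_abs _).symm)
          have h2 : |z.2| ≤ ‖z‖ := by
            rw [Prod.norm_def]; exact le_max_of_le_right (le_of_eq (Real.norm_eq_abs _).symm)
          have := N_nonneg hN ((1:ℝ),(0:ℝ))
          have := N_nonneg hN ((0:ℝ),(1:ℝ))
          nlinarith [abs_nonneg z.1, abs_nonneg z.2]
      _ = (N (1,0) + N (0,1)) * ‖z‖ := by ring
  set C := N (1,0) + N (0,1) with hC
  have hC0 : 0 ≤ C := by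
    have := N_nonneg hN ((1:ℝ),(0:ℝ)); have := N_nonneg hN ((0:ℝ),(1:ℝ)); linarith
  have : LipschitzWith C.toNNReal N := by
    rw [lipschitzWith_iff_dist_le_mul]
    intro x y
    rw [Real.dist_eq, dist_eq_norm]
    rw [abs_sub_le_iff]
    constructor
    · calc N x - N y ≤ N (x - y) := N_sub_le hN x y
        _ ≤ C * ‖x - y‖ := key _
        _ = (C.toNNReal : ℝ) * ‖x - y‖ := by rw [Real.coe_toNNReal C hC0]
    · calc N y - N x ≤ N (y - x) := N_sub_le hN y x
        _ ≤ C * ‖y - x‖ := key _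
        _ = (C.toNNReal : ℝ) * ‖x - y‖ := by rw [Real.coe_toNNReal C hC0, norm_sub_rev]
  exact this.continuous

/-- determinant functional measuring the side of the line `ℝ v`. -/
def ff (v z : ℝ × ℝ) : ℝ := v.1 * z.2 - v.2 * z.1

lemma ff_kernel {v z : ℝ × ℝ} (hv : v ≠ 0) (h : ff v z = 0) : ∃ t : ℝ, z = t • v := by
  unfold ff at h
  by_cases h1 : v.1 = 0
  · have h2 : v.2 ≠ 0 := fun h2 => hv (Prod.ext h1 h2)
    refine ⟨z.2 / v.2, ?_⟩
    rw [Prod.ext_iff]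
    constructor
    · simp only [Prod.smul_fst, smul_eq_mul, h1, mul_zero]
      rw [h1] at h; simpa [h2] using h.symm
    · simp only [Prod.smul_snd, smul_eq_mul]
      field_simp
  · refine ⟨z.1 / v.1, ?_⟩
    rw [Prod.ext_iff]
    constructor
    · simp only [Prod.smul_fst, smul_eq_mul]; field_simp
    · simp only [Prod.smul_snd, smul_eq_mul]
      field_simp
      linear_combination h

lemma ff_vv (v : ℝ × ℝ) : ff v v = 0 := by unfold ff; ring

lemma ff_sub (v x y : ℝ × ℝ) : ff v (x - y) = ff v x - ff v y := by
  unfold ff; simp [Prod.fst_sub, Prod.snd_sub]; ring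

lemma ff_smul (v : ℝ × ℝ) (t : ℝ) (x : ℝ × ℝ) : ff v (t • x) = t * ff v x := by
  unfold ff; simp [Prod.smul_fst, Prod.smul_snd]; ring

lemma ff_add (v x y : ℝ × ℝ) : ff v (x + y) = ff v x + ff v y := by
  unfold ff; simp [Prod.fst_add, Prod.snd_add]; ring

/-- convex combination bound -/
lemma N_combo (hN : IsNorm N) {a b : ℝ} (ha : 0 ≤ a) (hb : 0 ≤ b) (x y : ℝ × ℝ) :
    N (a • x + b • y) ≤ a * N x + b * N y := by
  calc N (a • x + b • y) ≤ N (a • x) + N (b • y) := hN.add_le _ _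
    _ = a * N x + b * N y := by rw [hN.smul_eq, hN.smul_eq, abs_of_nonneg ha, abs_of_nonneg hb]

/-- If `e` is strictly inside `[c,d]`, `N c ≤ 1`, `N d ≤ 1`, `N e = 1`, then the whole
segment is on the unit sphere. -/
lemma midseg (hN : IsNorm N) {c d : ℝ × ℝ} {μ : ℝ} (h0 : 0 < μ) (h1 : μ < 1)
    (hc : N c ≤ 1) (hd : N d ≤ 1) (he : N (c + μ • (d - c)) = 1) :
    N c = 1 ∧ N d = 1 ∧ segment ℝ c d ⊆ {x : ℝ × ℝ | N x = 1} := by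
  have hecomb : c + μ • (d - c) = (1 - μ) • c + μ • d := by module
  rw [hecomb] at he
  have hele : (1:ℝ) ≤ (1 - μ) * N c + μ * N d := by
    have h' := N_combo hN (by linarith : (0:ℝ) ≤ 1 - μ) (le_of_lt h0) c d
    linarith [he ▸ h']
  have hNc : N c = 1 := by nlinarith
  have hNd : N d = 1 := by nlinarith
  refine ⟨hNc, hNd, ?_⟩
  rintro z ⟨a, b, ha, hb, hab, hz⟩
  simp only [Set.mem_setOf_eq]
  have hzle : N z ≤ 1 := by
    rw [← hz]
    calc N (a • c + b • d) ≤ a * N c + b * N d := N_combo hN ha hb c d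
      _ = 1 := by rw [hNc, hNd]; linarith
  have ha' : a = 1 - b := by linarith
  refine le_antisymm hzle ?_
  rcases le_total b μ with hbμ | hbμ
  · have hid : (1 - b) • ((1 - μ) • c + μ • d) = (1 - μ) • z + (μ - b) • d := by
      rw [← hz, ha']; module
    have hNlhs : N ((1 - μ) • z + (μ - b) • d) = 1 - b := by
      rw [← hid, hN.smul_eq, he, abs_of_nonneg (by linarith : (0:ℝ) ≤ 1 - b)]; ring
    have hNrhs := N_combo hN (by linarith : (0:ℝ) ≤ 1 - μ) (by linarith : (0:ℝ) ≤ μ - b) z d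
    rw [hNlhs] at hNrhs
    nlinarith
  · have hid : b • ((1 - μ) • c + μ • d) = μ • z + (b - μ) • c := by
      rw [← hz, ha']; module
    have hNlhs : N (μ • z + (b - μ) • c) = b := by
      rw [← hid, hN.smul_eq, he, abs_of_nonneg (by linarith : (0:ℝ) ≤ b)]; ring
    have hNrhs := N_combo hN (le_of_lt h0) (by linarith : (0:ℝ) ≤ b - μ) z c
    rw [hNlhs] at hNrhs
    nlinarith

/-- Three collinear points `p + A•v`, `p + E•v`, `p + B•v` with the middle on the
sphere and ends in the ball, spanning length `> 1`, give a long segment. -/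
lemma final_of_coords (hN : IsNorm N) (p v : ℝ × ℝ) (hv : N v = 1) {A E B : ℝ}
    (h1 : A < E) (h2 : E < B) (h3 : 1 < B - A)
    (hA : N (p + A • v) ≤ 1) (hB : N (p + B • v) ≤ 1) (hE : N (p + E • v) = 1) :
    ∃ c d : ℝ × ℝ, N c = 1 ∧ N d = 1 ∧ 1 < N (c - d) ∧
      segment ℝ c d ⊆ {x : ℝ × ℝ | N x = 1} := by
  set c := p + A • v
  set d := p + B • v
  have hBA : (0:ℝ) < B - A := by linarith
  set μ := (E - A) / (B - A) with hμdef
  have hμ0 : 0 < μ := div_pos (by linarith) hBA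
  have hμ1 : μ < 1 := by
    rw [hμdef, div_lt_one hBA]; linarith
  have hkey : c + μ • (d - c) = p + E • v := by
    have hdc : d - c = (B - A) • v := by simp only [c, d]; module
    rw [hdc, smul_smul, hμdef, div_mul_cancel₀ _ (ne_of_gt hBA)]
    simp only [c]; module
  have he : N (c + μ • (d - c)) = 1 := by rw [hkey]; exact hE
  obtain ⟨hc1, hd1, hseg⟩ := midseg hN hμ0 hμ1 hA hB he
  refine ⟨c, d, hc1, hd1, ?_, hseg⟩
  have : c - d = (A - B) • v := by simp only [c, d]; module
  rw [this, hN.smul_eq, hv, abs_of_neg (by linarith : A - B < 0)]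
  linarith

/-- Two distinct solutions on the same (positive) side give a long segment. -/
lemma main_lemma (hN : IsNorm N) {v p q : ℝ × ℝ} (hv : N v = 1)
    (hp : N p = 1) (hp' : N (p - v) = 1) (hq : N q = 1) (hq' : N (q - v) = 1)
    (hpq : p ≠ q) (hb1 : 0 < ff v p) (hb12 : ff v p ≤ ff v q) :
    ∃ c d : ℝ × ℝ, N c = 1 ∧ N d = 1 ∧ 1 < N (c - d) ∧
      segment ℝ c d ⊆ {x : ℝ × ℝ | N x = 1} := by
  have hv0 : v ≠ 0 := by
    intro h0; rw [h0, N_zero hN] at hv; norm_num at hv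
  rcases eq_or_lt_of_le hb12 with heq | hlt
  · -- collinear case : p - q = t • v
    have hker : ff v (p - q) = 0 := by rw [ff_sub]; linarith
    obtain ⟨t, ht⟩ := ff_kernel hv0 hker
    have ht0 : t ≠ 0 := by
      intro h0; rw [h0, zero_smul, sub_eq_zero] at ht; exact hpq ht
    have hqe : q = p + (-t) • v := by
      have h' := ht
      rw [sub_eq_iff_eq_add] at h'
      rw [h']; module
    rcases lt_or_gt_of_ne ht0 with htneg | htpos
    · -- t < 0 : A = -1, E = 0, B = -t
      refine final_of_coords hN p v hv (by linarith : (-1:ℝ) < 0)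
        (by linarith : (0:ℝ) < -t) (by linarith : (1:ℝ) < -t - (-1)) ?_ ?_ ?_
      · have : p + (-1 : ℝ) • v = p - v := by module
        rw [this, hp']
      · rw [← hqe]; exact le_of_eq hq
      · rw [zero_smul, add_zero, hp]
    · -- t > 0 : A = -1 - t, E = -1, B = 0
      refine final_of_coords hN p v hv (by linarith : (-1 - t:ℝ) < -1)
        (by linarith : (-1:ℝ) < 0) (by linarith : (1:ℝ) < 0 - (-1 - t)) ?_ ?_ ?_
      · have : p + (-1 - t : ℝ) • v = q - v := by rw [hqe]; module
        rw [this, hq']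
      · rw [zero_smul, add_zero]; exact le_of_eq hp
      · have : p + (-1 : ℝ) • v = p - v := by module
        rw [this, hp']
  · -- non-collinear case
    set β₁ := ff v p with hβ₁
    set β₂ := ff v q with hβ₂
    have hβ₂0 : 0 < β₂ := lt_trans hb1 hlt
    set lam := (β₂ - β₁) / β₂ with hlam
    have hlam0 : 0 < lam := div_pos (by linarith) hβ₂0
    have hlam1 : lam < 1 := by
      rw [hlam, div_lt_one hβ₂0]; linarith
    set B' := lam • v + (1 - lam) • q with hB'
    have hffB' : ff v (B' - p) = 0 := by
      rw [ff_sub, hB', ff_add, ff_smul, ff_smul, ff_vv]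
      have : (1 - lam) * β₂ = β₁ := by
        rw [hlam]; field_simp; ring
      rw [← hβ₂, ← hβ₁]
      linarith [this]
    obtain ⟨b, hb⟩ := ff_kernel hv0 hffB'
    have hB'e : B' = p + b • v := by
      have h' := hb
      rw [sub_eq_iff_eq_add] at h'
      rw [h']; module
    have hA'e : lam • (-v) + (1 - lam) • (q - v) = p + (b - 1 - lam) • v := by
      have : lam • (-v) + (1 - lam) • (q - v) = B' - (1 + lam) • v := by rw [hB']; module
      rw [this, hB'e]; module
    have hNB' : N B' ≤ 1 := by
      calc N B' ≤ lam * N v + (1 - lam) * N q :=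
            N_combo hN (le_of_lt hlam0) (by linarith) v q
        _ = 1 := by rw [hv, hq]; ring
    have hNA' : N (p + (b - 1 - lam) • v) ≤ 1 := by
      rw [← hA'e]
      calc N (lam • (-v) + (1 - lam) • (q - v)) ≤ lam * N (-v) + (1 - lam) * N (q - v) :=
            N_combo hN (le_of_lt hlam0) (by linarith) _ _
        _ = 1 := by rw [N_neg hN, hv, hq']; ring
    rcases lt_or_ge (b - 1 - lam) (-1 : ℝ) with ha | ha
    · -- A = b - 1 - lam, E = -1, B = 0
      refine final_of_coords hN p v hv ha (by norm_num : (-1:ℝ) < 0)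
        (by linarith : (1:ℝ) < 0 - (b - 1 - lam)) hNA' ?_ ?_
      · rw [zero_smul, add_zero]; exact le_of_eq hp
      · have : p + (-1 : ℝ) • v = p - v := by module
        rw [this, hp']
    · -- b ≥ lam > 0 : A = -1, E = 0, B = b
      have hbpos : 0 < b := by linarith
      refine final_of_coords hN p v hv (by linarith : (-1:ℝ) < 0) hbpos
        (by linarith : (1:ℝ) < b - (-1)) ?_ ?_ ?_
      · have : p + (-1 : ℝ) • v = p - v := by module
        rw [this, hp']
      · rw [← hB'e]; exact hNB'
      · rw [zero_smul, add_zero, hp]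

open Real in
/-- There is a solution on the positive side of the line through `0` and `v`. -/
lemma exists_sol (hN : IsNorm N) {v : ℝ × ℝ} (hv : N v = 1) :
    ∃ x : ℝ × ℝ, N x = 1 ∧ N (x - v) = 1 ∧ 0 < ff v x := by
  have hv0 : v ≠ 0 := by
    intro h0; rw [h0, N_zero hN] at hv; norm_num at hv
  have hvsq : 0 < v.1 ^ 2 + v.2 ^ 2 := by
    rcases (by by_contra hc; push_neg at hc; exact hv0 (Prod.ext hc.1 hc.2) :
        v.1 ≠ 0 ∨ v.2 ≠ 0) with h | h
    · have := sq_nonneg v.2; have : 0 < v.1 ^ 2 := by positivity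
      linarith [sq_nonneg v.2]
    · have : 0 < v.2 ^ 2 := by positivity
      linarith [sq_nonneg v.1]
  set u : ℝ × ℝ := (-v.2, v.1) with hu
  set z : ℝ → ℝ × ℝ := fun t => Real.cos (π * t) • v + Real.sin (π * t) • u with hz
  have hzne : ∀ t, z t ≠ 0 := by
    intro t h
    rw [Prod.ext_iff] at h
    simp only [hz, hu, Prod.fst_add, Prod.snd_add, Prod.smul_fst, Prod.smul_snd,
      smul_eq_mul, Prod.fst_zero, Prod.snd_zero] at h
    obtain ⟨h1, h2⟩ := h
    have hcos : Real.cos (π * t) * (v.1 ^ 2 + v.2 ^ 2) = 0 := by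
      linear_combination v.1 * h1 + v.2 * h2
    have hsin : Real.sin (π * t) * (v.1 ^ 2 + v.2 ^ 2) = 0 := by
      linear_combination (-v.2) * h1 + v.1 * h2
    have hc0 : Real.cos (π * t) = 0 := by
      rcases mul_eq_zero.mp hcos with h | h
      · exact h
      · linarith
    have hs0 : Real.sin (π * t) = 0 := by
      rcases mul_eq_zero.mp hsin with h | h
      · exact h
      · linarith
    have := Real.sin_sq_add_cos_sq (π * t)
    rw [hc0, hs0] at this; norm_num at this
  have hNz : ∀ t, 0 < N (z t) := fun t => N_pos hN (hzne t)
  set γ : ℝ → ℝ × ℝ := fun t => (N (z t))⁻¹ • z t with hγ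
  set g : ℝ → ℝ := fun t => N (γ t - v) with hg
  have hzc : Continuous z := by
    apply Continuous.add
    · exact (Real.continuous_cos.comp (continuous_const.mul continuous_id)).smul continuous_const
    · exact (Real.continuous_sin.comp (continuous_const.mul continuous_id)).smul continuous_const
  have hNcont := N_continuous hN
  have hγc : Continuous γ :=
    ((hNcont.comp hzc).inv₀ (fun t => ne_of_gt (hNz t))).smul hzc
  have hgc : Continuous g := hNcont.comp (hγc.sub continuous_const)
  have hz0 : z 0 = v := by
    simp [hz]
  have hz1 : z 1 = -v := by
    simp [hz]
  have hg0 : g 0 = 0 := by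
    simp only [hg, hγ, hz0, hv, inv_one, one_smul, sub_self]
    exact N_zero hN
  have hg1 : g 1 = 2 := by
    have hNv : N (-v) = 1 := by rw [N_neg hN]; exact hv
    simp only [hg, hγ, hz1, hNv, inv_one, one_smul]
    have : -v - v = (-2 : ℝ) • v := by module
    rw [this, hN.smul_eq, hv]
    norm_num
  have hsub : Set.Icc (g 0) (g 1) ⊆ g '' Set.Icc 0 1 :=
    intermediate_value_Icc (by norm_num) hgc.continuousOn
  have h1mem : (1:ℝ) ∈ Set.Icc (g 0) (g 1) := by
    rw [hg0, hg1]; norm_num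
  obtain ⟨t₁, ht₁mem, ht₁⟩ := hsub h1mem
  have ht₁0 : t₁ ≠ 0 := by
    intro h; rw [h, hg0] at ht₁; norm_num at ht₁
  have ht₁1 : t₁ ≠ 1 := by
    intro h; rw [h, hg1] at ht₁; norm_num at ht₁
  have ht₁pos : 0 < t₁ := lt_of_le_of_ne ht₁mem.1 (Ne.symm ht₁0)
  have ht₁lt : t₁ < 1 := lt_of_le_of_ne ht₁mem.2 ht₁1
  refine ⟨γ t₁, ?_, ht₁, ?_⟩
  · simp only [hγ, hN.smul_eq, abs_of_pos (inv_pos.mpr (hNz t₁))]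
    exact inv_mul_cancel₀ (ne_of_gt (hNz t₁))
  · have hsinpos : 0 < Real.sin (π * t₁) :=
      Real.sin_pos_of_pos_of_lt_pi (by positivity)
        (by nlinarith [Real.pi_pos])
    have hffu : ff v u = v.1 ^ 2 + v.2 ^ 2 := by
      simp only [ff, hu]; ring
    have : ff v (γ t₁) = (N (z t₁))⁻¹ * (Real.sin (π * t₁) * (v.1 ^ 2 + v.2 ^ 2)) := by
      simp only [hγ, ff_smul, hz, ff_add, ff_smul, ff_vv, hffu]
      ring
    rw [this]
    have := hNz t₁
    positivity

end URTCaux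



open URTCaux

/-- If `N` is not a URTC-norm, then its unit sphere contains a segment whose
endpoints are at distance `> 1`. -/
theorem long_segment_of_not_URTC (N : ℝ × ℝ → ℝ) (hN : IsNorm N)
    (h : ¬ IsURTC N) :
    ∃ c d : ℝ × ℝ, N c = 1 ∧ N d = 1 ∧ 1 < N (c - d) ∧
      segment ℝ c d ⊆ {x : ℝ × ℝ | N x = 1} := by
  unfold IsURTC at h
  push_neg at h
  obtain ⟨a, b, hab1, hab2⟩ := h
  set v := a - b with hvdef
  have hv : N v = 1 := hab1
  have hv0 : v ≠ 0 := by
    intro h0; rw [h0, N_zero hN] at hv; norm_num at hv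
  have hNneg : ∀ w : ℝ × ℝ, N (-w) = N w := N_neg hN
  -- two solutions
  obtain ⟨x₁, hx1a, hx1b, hx1f⟩ := exists_sol hN hv
  set x₂ := v - x₁ with hx2def
  have hx2a : N x₂ = 1 := by
    have : x₂ = -(x₁ - v) := by rw [hx2def]; module
    rw [this, hNneg]; exact hx1b
  have hx2b : N (x₂ - v) = 1 := by
    have : x₂ - v = -x₁ := by rw [hx2def]; module
    rw [this, hNneg]; exact hx1a
  have hx2f : ff v x₂ < 0 := by
    rw [hx2def, ff_sub, ff_vv]; linarith
  have hx12 : x₁ ≠ x₂ := by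
    intro h'; rw [← h'] at hx2f; linarith
  -- membership translation
  set S' := {x : ℝ × ℝ | N (a - x) = 1 ∧ N (b - x) = 1} with hS'
  have hmem : ∀ y : ℝ × ℝ, N y = 1 → N (y - v) = 1 → a - y ∈ S' := by
    intro y h1 h2
    constructor
    · have : a - (a - y) = y := by module
      rw [this]; exact h1
    · have : b - (a - y) = y - v := by rw [hvdef]; module
      rw [this]; exact h2
  have hne' : a - x₁ ≠ a - x₂ := fun h' => hx12 (sub_right_injective h')
  -- third solution
  have hex : ∃ y ∈ S', y ∉ ({a - x₁, a - x₂} : Set (ℝ × ℝ)) := by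
    by_contra hc
    push_neg at hc
    have hsub1 : S' ⊆ {a - x₁, a - x₂} := hc
    have hsub2 : ({a - x₁, a - x₂} : Set (ℝ × ℝ)) ⊆ S' := by
      rintro w (rfl | rfl)
      · exact hmem x₁ hx1a hx1b
      · exact hmem x₂ hx2a hx2b
    have : S' = {a - x₁, a - x₂} := Set.Subset.antisymm hsub1 hsub2
    rw [this, Set.encard_pair hne'] at hab2
    exact hab2 rfl
  obtain ⟨y, hyS, hyP⟩ := hex
  set x₃ := a - y with hx3def
  have hx3a : N x₃ = 1 := hyS.1
  have hx3b : N (x₃ - v) = 1 := by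
    have : x₃ - v = b - y := by rw [hx3def, hvdef]; module
    rw [this]; exact hyS.2
  have hx31 : x₃ ≠ x₁ := by
    intro h'
    apply hyP
    simp only [Set.mem_insert_iff, Set.mem_singleton_iff]
    left
    rw [← h', hx3def]; module
  have hx32 : x₃ ≠ x₂ := by
    intro h'
    apply hyP
    simp only [Set.mem_insert_iff, Set.mem_singleton_iff]
    right
    rw [← h', hx3def]; module
  have hx3f : ff v x₃ ≠ 0 := by
    intro h0
    obtain ⟨t, ht⟩ := ff_kernel hv0 h0
    have habs : |t| = 1 := by
      rw [ht, hN.smul_eq, hv, mul_one] at hx3a; exact hx3a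
    rcases (abs_eq (by norm_num : (0:ℝ) ≤ 1)).mp habs with rfl | rfl
    · rw [ht, one_smul, sub_self, N_zero hN] at hx3b; norm_num at hx3b
    · rw [ht] at hx3b
      have : (-1 : ℝ) • v - v = (-2 : ℝ) • v := by module
      rw [this, hN.smul_eq, hv] at hx3b; norm_num at hx3b
  rcases lt_or_gt_of_ne hx3f with hneg | hpos
  · -- reflect x₃
    set p := v - x₃ with hpdef
    have hpa : N p = 1 := by
      have : p = -(x₃ - v) := by rw [hpdef]; module
      rw [this, hNneg]; exact hx3b
    have hpb : N (p - v) = 1 := by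
      have : p - v = -x₃ := by rw [hpdef]; module
      rw [this, hNneg]; exact hx3a
    have hpf : 0 < ff v p := by
      rw [hpdef, ff_sub, ff_vv]; linarith
    have hpx1 : p ≠ x₁ := by
      intro h'
      apply hx32
      rw [hx2def, ← h', hpdef]; module
    rcases le_total (ff v p) (ff v x₁) with hle | hle
    · exact main_lemma hN hv hpa hpb hx1a hx1b hpx1 hpf hle
    · exact main_lemma hN hv hx1a hx1b hpa hpb (Ne.symm hpx1) hx1f hle
  · rcases le_total (ff v x₃) (ff v x₁) with hle | hle
    · exact main_lemma hN hv hx3a hx3b hx1a hx1b hx31 hpos hle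
    · exact main_lemma hN hv hx1a hx1b hx3a hx3b (Ne.symm hx31) hx1f hle
end

section
/- Let ‖·‖ be a URTC-norm on ℝ² with unit sphere S. Suppose a, b, c, d ∈ S satisfy ‖a − d‖ = ‖b − c‖ = 1 and the six points a − d, a, b, c, d, d − a lie on S in this counterclockwise (positively oriented) cyclic order. Then a = b and c = d. -/
/-- `p` lies on the open ray from the origin at angle `t`. -/
def OnRay (p : ℝ × ℝ) (t : ℝ) : Prop :=
  ∃ r : ℝ, 0 < r ∧ p = (r * Real.cos t, r * Real.sin t)

variable {N : ℝ × ℝ → ℝ}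

lemma urtcNormZero (hN : IsNorm N) : N 0 = 0 := by
  have := hN.smul_eq 0 0
  simpa using this

lemma urtcNormNeg (hN : IsNorm N) (x : ℝ × ℝ) : N (-x) = N x := by
  have := hN.smul_eq (-1) x
  simpa using this

lemma urtcNormNonneg (hN : IsNorm N) (x : ℝ × ℝ) : 0 ≤ N x := by
  have h := hN.add_le x (-x)
  rw [add_neg_cancel, urtcNormNeg hN, urtcNormZero hN] at h
  linarith

lemma urtcNormSmul (hN : IsNorm N) {r : ℝ} (hr : 0 ≤ r) (x : ℝ × ℝ) :
    N (r • x) = r * N x := by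
  rw [hN.smul_eq, abs_of_nonneg hr]

lemma urtcNormPos (hN : IsNorm N) {x : ℝ × ℝ} (hx : x ≠ 0) : 0 < N x :=
  lt_of_le_of_ne (urtcNormNonneg hN x) (fun h => hx (hN.eq_zero_of x h.symm))

lemma urtcCore (hN : IsNorm N) {u v w : ℝ × ℝ} (hu : N u = 1) (hv : N v = 1) (hw : N w = 1)
    {α β : ℝ} (hα : 0 ≤ α) (hβ : 0 ≤ β) (hvr : v = α • u + β • w) :
    N (u - v) ≤ N (u - w) := by
  have hl1 : 1 ≤ α + β := by
    have h := hN.add_le (α • u) (β • w)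
    rw [← hvr, hv, urtcNormSmul hN hα, urtcNormSmul hN hβ, hu, hw] at h
    linarith
  have hl0 : (0:ℝ) < α + β := by linarith
  have key1 : (α + β) * N (u - v) ≤ β * N (u - w) + ((α + β) - 1) := by
    have hdec : (α + β) • (u - v) = β • (u - w) + (1 - (α + β)) • v := by
      rw [hvr]; module
    have h1 : N ((α + β) • (u - v)) ≤ N (β • (u - w)) + N ((1 - (α + β)) • v) :=
      hdec ▸ hN.add_le _ _
    rw [urtcNormSmul hN hl0.le, urtcNormSmul hN hβ, hN.smul_eq, hv,
      abs_of_nonpos (by linarith)] at h1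
    linarith
  have key2 : (α + β) - 1 ≤ α * N (u - w) := by
    have hdec2 : v - (α + β) • w = α • (u - w) := by rw [hvr]; module
    have h2 : N ((α + β) • w) ≤ N ((α + β) • w - v) + N v := by
      have := hN.add_le ((α + β) • w - v) v
      simpa using this
    have h3 : N ((α + β) • w - v) = α * N (u - w) := by
      rw [show (α + β) • w - v = -(v - (α + β) • w) by abel, urtcNormNeg hN, hdec2,
        urtcNormSmul hN hα]
    rw [urtcNormSmul hN hl0.le, hw, hv, h3] at h2
    linarith
  have : (α + β) * N (u - v) ≤ (α + β) * N (u - w) := by linarith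
  exact le_of_mul_le_mul_left this hl0

lemma urtcCone {u v w : ℝ × ℝ} {s t t' : ℝ} (hu : OnRay u s) (hv : OnRay v t)
    (hw : OnRay w t') (hst : s ≤ t) (htt : t ≤ t') (hsp : t' - s < Real.pi) :
    ∃ α β : ℝ, 0 ≤ α ∧ 0 ≤ β ∧ v = α • u + β • w := by
  obtain ⟨p, hp, hup⟩ := hu
  obtain ⟨q, hq, hvq⟩ := hv
  obtain ⟨m, hm, hwm⟩ := hw
  rcases eq_or_lt_of_le (hst.trans htt) with h | h
  · -- s = t = t'
    have hts : t = s := le_antisymm (h ▸ htt) hst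
    refine ⟨q / p, 0, by positivity, le_refl 0, ?_⟩
    subst hts hup hvq
    simp [Prod.ext_iff, smul_eq_mul]
    constructor <;> field_simp
  · have hD : 0 < Real.sin (t' - s) := Real.sin_pos_of_pos_of_lt_pi (by linarith) hsp
    have h1 : 0 ≤ Real.sin (t' - t) :=
      Real.sin_nonneg_of_nonneg_of_le_pi (by linarith) (by linarith)
    have h2 : 0 ≤ Real.sin (t - s) :=
      Real.sin_nonneg_of_nonneg_of_le_pi (by linarith) (by linarith)
    refine ⟨q * Real.sin (t' - t) / (p * Real.sin (t' - s)),
            q * Real.sin (t - s) / (m * Real.sin (t' - s)), ?_, ?_, ?_⟩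
    · positivity
    · positivity
    · subst hup hvq hwm
      have hp' := hp.ne'
      have hm' := hm.ne'
      have hD' := hD.ne'
      simp only [Prod.smul_mk, Prod.mk_add_mk, smul_eq_mul, Prod.mk.injEq]
      constructor <;>
      · rw [div_mul_eq_mul_div, div_mul_eq_mul_div, div_add_div _ _ (by positivity) (by positivity),
          eq_div_iff (by positivity)]
        simp only [Real.sin_sub]
        ring

lemma urtcMono (hN : IsNorm N) {u v w : ℝ × ℝ} {s t t' : ℝ}
    (hu : OnRay u s) (hv : OnRay v t) (hw : OnRay w t')
    (hst : s ≤ t) (htt : t ≤ t') (hsp : t' - s < Real.pi)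
    (nu : N u = 1) (nv : N v = 1) (nw : N w = 1) :
    N (u - v) ≤ N (u - w) ∧ N (w - v) ≤ N (u - w) := by
  obtain ⟨α, β, hα, hβ, hrep⟩ := urtcCone hu hv hw hst htt hsp
  constructor
  · exact urtcCore hN nu nv nw hα hβ hrep
  · have h := urtcCore hN nw nv nu hβ hα (by rw [hrep]; abel)
    calc N (w - v) ≤ N (w - u) := h
    _ = N (u - w) := by rw [show w - u = -(u - w) by abel, urtcNormNeg hN]

lemma urtcRayUnique (hN : IsNorm N) {x y : ℝ × ℝ} {t : ℝ} (hx : OnRay x t) (hy : OnRay y t)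
    (nx : N x = 1) (ny : N y = 1) : x = y := by
  obtain ⟨r, hr, rfl⟩ := hx
  obtain ⟨r', hr', rfl⟩ := hy
  have he : ((Real.cos t, Real.sin t) : ℝ × ℝ) ≠ 0 := by
    intro h
    rw [Prod.ext_iff] at h
    have := Real.sin_sq_add_cos_sq t
    simp at h
    rw [h.1, h.2] at this
    norm_num at this
  have hNe : 0 < N (Real.cos t, Real.sin t) := urtcNormPos hN he
  have e1 : ((r * Real.cos t, r * Real.sin t) : ℝ × ℝ) = r • (Real.cos t, Real.sin t) := by
    simp [Prod.ext_iff, smul_eq_mul]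
  have e2 : ((r' * Real.cos t, r' * Real.sin t) : ℝ × ℝ) = r' • (Real.cos t, Real.sin t) := by
    simp [Prod.ext_iff, smul_eq_mul]
  rw [e1, urtcNormSmul hN hr.le] at nx
  rw [e2, urtcNormSmul hN hr'.le] at ny
  have : r = r' := by
    have : r * N (Real.cos t, Real.sin t) = r' * N (Real.cos t, Real.sin t) := by rw [nx, ny]
    exact mul_right_cancel₀ hNe.ne' this
  rw [this]

lemma urtcUnitOnRay (hN : IsNorm N) (t : ℝ) :
    OnRay (((N (Real.cos t, Real.sin t))⁻¹ * Real.cos t,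
            (N (Real.cos t, Real.sin t))⁻¹ * Real.sin t) : ℝ × ℝ) t ∧
    N (((N (Real.cos t, Real.sin t))⁻¹ * Real.cos t,
        (N (Real.cos t, Real.sin t))⁻¹ * Real.sin t) : ℝ × ℝ) = 1 := by
  have he : ((Real.cos t, Real.sin t) : ℝ × ℝ) ≠ 0 := by
    intro h
    rw [Prod.ext_iff] at h
    have := Real.sin_sq_add_cos_sq t
    simp at h
    rw [h.1, h.2] at this
    norm_num at this
  have hNe : 0 < N (Real.cos t, Real.sin t) := urtcNormPos hN he
  constructor
  · exact ⟨(N (Real.cos t, Real.sin t))⁻¹, by positivity, rfl⟩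
  · have e1 : (((N (Real.cos t, Real.sin t))⁻¹ * Real.cos t,
        (N (Real.cos t, Real.sin t))⁻¹ * Real.sin t) : ℝ × ℝ)
        = (N (Real.cos t, Real.sin t))⁻¹ • (Real.cos t, Real.sin t) := by
      simp [Prod.ext_iff, smul_eq_mul]
    rw [e1, urtcNormSmul hN (by positivity)]
    field_simp

lemma urtcAngleInj {x : ℝ × ℝ} {t t' : ℝ} (hx : OnRay x t) (hx' : OnRay x t')
    (h : |t - t'| < 2 * Real.pi) : t = t' := by
  obtain ⟨r, hr, hxe⟩ := hx
  obtain ⟨r', hr', hxe'⟩ := hx'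
  rw [hxe'] at hxe
  rw [Prod.ext_iff] at hxe
  simp only at hxe
  obtain ⟨h1, h2⟩ := hxe
  have c1 := Real.sin_sq_add_cos_sq t
  have c2 := Real.sin_sq_add_cos_sq t'
  have e1 : (r' * Real.cos t') ^ 2 + (r' * Real.sin t') ^ 2 = r' ^ 2 := by
    linear_combination (r' ^ 2) * c2
  have e2 : (r * Real.cos t) ^ 2 + (r * Real.sin t) ^ 2 = r ^ 2 := by
    linear_combination (r ^ 2) * c1
  have hrr : r' ^ 2 = r ^ 2 := by rw [← e1, h1, h2, e2]
  have hr2 : r' = r := by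
    have hz : (r' - r) * (r' + r) = 0 := by linear_combination hrr
    rcases mul_eq_zero.mp hz with hz | hz
    · linarith
    · linarith
  subst hr2
  have ec : Real.cos t' = Real.cos t := mul_left_cancel₀ hr'.ne' h1
  have es : Real.sin t' = Real.sin t := mul_left_cancel₀ hr'.ne' h2
  have hcos : Real.cos (t - t') = 1 := by
    rw [Real.cos_sub, ec, es, ← Real.sin_sq_add_cos_sq t]
    ring
  have habs := abs_lt.mp h
  rw [Real.cos_eq_one_iff_of_lt_of_lt (by linarith [habs.1]) (by linarith [habs.2])] at hcos
  linarith

lemma urtcNormSubComm (hN : IsNorm N) (x y : ℝ × ℝ) : N (x - y) = N (y - x) := by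
  rw [show x - y = -(y - x) by abel, urtcNormNeg hN]

theorem eq_of_positively_oriented' (N : ℝ × ℝ → ℝ) (hN : IsNorm N)
    (hU : ∀ a b : ℝ × ℝ, N (a - b) = 1 →
      {x : ℝ × ℝ | N (a - x) = 1 ∧ N (b - x) = 1}.encard = 2)
    (a b c d : ℝ × ℝ)
    (ha : N a = 1) (hb : N b = 1) (hc : N c = 1) (hd : N d = 1)
    (had : N (a - d) = 1) (hbc : N (b - c) = 1)
    (t₀ t₁ t₂ t₃ t₄ t₅ : ℝ)
    (h01 : t₀ ≤ t₁) (h12 : t₁ ≤ t₂) (h23 : t₂ ≤ t₃) (h34 : t₃ ≤ t₄) (h45 : t₄ ≤ t₅)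
    (h5 : t₅ = t₀ + Real.pi)
    (r0 : OnRay (a - d) t₀) (r1 : OnRay a t₁) (r2 : OnRay b t₂) (r3 : OnRay c t₃)
    (r4 : OnRay d t₄) (r5 : OnRay (d - a) t₅) :
    a = b ∧ c = d := by
  have hπ := Real.pi_pos
  have hd0 : d ≠ 0 := by
    intro h
    rw [h, urtcNormZero hN] at hd
    norm_num at hd
  have hspread : t₄ - t₁ < Real.pi := by
    rcases lt_or_eq_of_le (show t₄ - t₁ ≤ Real.pi by linarith) with h | h
    · exact h
    · exfalso
      have h10 : t₁ = t₀ := by linarith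
      have r1' : OnRay a t₀ := by rw [← h10]; exact r1
      have heq : a = a - d := urtcRayUnique hN r1' r0 ha had
      have heq' : a - d = a := heq.symm
      rw [sub_eq_self] at heq'
      exact hd0 heq'
  set f : ℝ → ℝ × ℝ := fun t => ((N (Real.cos t, Real.sin t))⁻¹ * Real.cos t,
    (N (Real.cos t, Real.sin t))⁻¹ * Real.sin t) with hf
  have hfRay : ∀ t, OnRay (f t) t := fun t => (urtcUnitOnRay hN t).1
  have hfN : ∀ t, N (f t) = 1 := fun t => (urtcUnitOnRay hN t).2
  have hcontra : ∀ (z : ℝ × ℝ) (l u' : ℝ), N z = 1 → l < u' → u' - l < Real.pi →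
      (∀ t, l ≤ t → t ≤ u' → N (z - f t) = 1) → False := by
    intro z l u' hz hlu hlt hall
    have hU0 := hU z 0 (by simpa using hz)
    have hsub : f '' (Set.Icc l u') ⊆ {x | N (z - x) = 1 ∧ N (0 - x) = 1} := by
      rintro x ⟨t, ht, rfl⟩
      exact ⟨hall t ht.1 ht.2, by rw [zero_sub, urtcNormNeg hN]; exact hfN t⟩
    have hinj : Set.InjOn f (Set.Icc l u') := by
      intro t ht t' ht' hft
      have h2 : OnRay (f t) t' := by rw [hft]; exact hfRay t'
      refine urtcAngleInj (hfRay t) h2 ?_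
      rw [abs_sub_lt_iff]
      constructor <;> nlinarith [ht.1, ht.2, ht'.1, ht'.2]
    have hinf : {x : ℝ × ℝ | N (z - x) = 1 ∧ N (0 - x) = 1}.Infinite :=
      Set.Infinite.mono hsub ((Set.Icc_infinite hlu).image hinj)
    rw [hinf.encard_eq] at hU0
    simp at hU0
  constructor
  · -- a = b
    rcases eq_or_lt_of_le h12 with h | h
    · have r2' : OnRay b t₁ := by rw [h]; exact r2
      exact urtcRayUnique hN r1 r2' ha hb
    · exfalso
      have hbd : N (b - d) = 1 := by
        have hup := (urtcMono hN r1 r2 r4 h12 (h23.trans h34) hspread ha hb hd).2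
        have hlo := (urtcMono hN r2 r3 r4 h23 h34 (by linarith) hb hc hd).1
        rw [had] at hup
        rw [hbc] at hlo
        rw [urtcNormSubComm hN d b] at hup
        linarith
      refine hcontra d t₁ t₂ hd h (by linarith) ?_
      intro t ht1 ht2
      have hup := (urtcMono hN r1 (hfRay t) r4 ht1 (ht2.trans (h23.trans h34)) hspread
        ha (hfN t) hd).2
      have hlo := (urtcMono hN (hfRay t) r2 r4 ht2 (h23.trans h34) (by linarith)
        (hfN t) hb hd).2
      rw [had] at hup
      rw [urtcNormSubComm hN d b, hbd] at hlo
      rw [urtcNormSubComm hN (f t) d] at hlo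
      linarith
  · -- c = d
    rcases eq_or_lt_of_le h34 with h | h
    · have r4' : OnRay d t₃ := by rw [h]; exact r4
      exact urtcRayUnique hN r3 r4' hc hd
    · exfalso
      have hac : N (a - c) = 1 := by
        have hlo := (urtcMono hN r1 r2 r3 h12 h23 (by linarith) ha hb hc).2
        have hup := (urtcMono hN r1 r3 r4 (h12.trans h23) h34 hspread ha hc hd).1
        rw [had] at hup
        rw [urtcNormSubComm hN c b, hbc] at hlo
        linarith
      refine hcontra a t₃ t₄ ha h (by linarith) ?_
      intro t ht1 ht2
      have hlo := (urtcMono hN r1 r3 (hfRay t) (h12.trans h23) ht1 (by linarith)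
        ha hc (hfN t)).1
      have hup := (urtcMono hN r1 (hfRay t) r4 ((h12.trans h23).trans ht1) ht2 hspread
        ha (hfN t) hd).1
      rw [had] at hup
      rw [hac] at hlo
      linarith


/-- If `a, b, c, d` lie on the unit sphere of a URTC-norm with
`N (a - d) = N (b - c) = 1`, and the points `a - d, a, b, c, d, d - a` occur in this
counterclockwise order on a positively traversed (half-)arc, then `a = b` and `c = d`. -/
theorem eq_of_positively_oriented (N : ℝ × ℝ → ℝ) (hN : IsNorm N) (hU : IsURTC N)
    (a b c d : ℝ × ℝ)
    (ha : N a = 1) (hb : N b = 1) (hc : N c = 1) (hd : N d = 1)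
    (had : N (a - d) = 1) (hbc : N (b - c) = 1)
    (t₀ t₁ t₂ t₃ t₄ t₅ : ℝ)
    (h01 : t₀ ≤ t₁) (h12 : t₁ ≤ t₂) (h23 : t₂ ≤ t₃) (h34 : t₃ ≤ t₄) (h45 : t₄ ≤ t₅)
    (h5 : t₅ = t₀ + Real.pi)
    (r0 : OnRay (a - d) t₀) (r1 : OnRay a t₁) (r2 : OnRay b t₂) (r3 : OnRay c t₃)
    (r4 : OnRay d t₄) (r5 : OnRay (d - a) t₅) :
    a = b ∧ c = d :=
  eq_of_positively_oriented' N hN hU a b c d ha hb hc hd had hbc t₀ t₁ t₂ t₃ t₄ t₅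
    h01 h12 h23 h34 h45 h5 r0 r1 r2 r3 r4 r5
end

section
/- Let ‖·‖ be an arbitrary norm on ℝ². Suppose a, b ∈ ℝ² with γ := ‖a − b‖ > 0, and let α, β ≥ 0 be real numbers satisfying |β − γ| ≤ α ≤ β + γ. Then there exists a point c ∈ ℝ² such that ‖a − c‖ = β and ‖b − c‖ = α. -/
lemma isnorm_zero {N : ℝ × ℝ → ℝ} (hN : IsNorm N) : N 0 = 0 := by
  have := hN.smul_eq 0 0
  simpa using this

lemma isnorm_neg {N : ℝ × ℝ → ℝ} (hN : IsNorm N) (x : ℝ × ℝ) : N (-x) = N x := by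
  have := hN.smul_eq (-1) x
  simpa using this

lemma isnorm_nonneg {N : ℝ × ℝ → ℝ} (hN : IsNorm N) (x : ℝ × ℝ) : 0 ≤ N x := by
  have h := hN.add_le x (-x)
  rw [isnorm_neg hN] at h
  simp [isnorm_zero hN] at h
  linarith

lemma isnorm_bound {N : ℝ × ℝ → ℝ} (hN : IsNorm N) (x : ℝ × ℝ) :
    N x ≤ |x.1| * N (1, 0) + |x.2| * N (0, 1) := by
  have hx : x = x.1 • ((1 : ℝ), (0 : ℝ)) + x.2 • ((0 : ℝ), (1 : ℝ)) := by
    simp [Prod.ext_iff]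
  calc N x = N (x.1 • ((1 : ℝ), (0 : ℝ)) + x.2 • ((0 : ℝ), (1 : ℝ))) := by rw [← hx]
    _ ≤ N (x.1 • ((1 : ℝ), (0 : ℝ))) + N (x.2 • ((0 : ℝ), (1 : ℝ))) := hN.add_le _ _
    _ = |x.1| * N (1, 0) + |x.2| * N (0, 1) := by rw [hN.smul_eq, hN.smul_eq]

lemma isnorm_continuous {N : ℝ × ℝ → ℝ} (hN : IsNorm N) : Continuous N := by
  set C : ℝ := N (1, 0) + N (0, 1) with hC
  have hC0 : 0 ≤ C := add_nonneg (isnorm_nonneg hN _) (isnorm_nonneg hN _)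
  have hdiff : ∀ x y : ℝ × ℝ, N x - N y ≤ N (x - y) := by
    intro x y
    have := hN.add_le (x - y) y
    simp at this
    linarith
  refine (LipschitzWith.of_dist_le_mul (K := Real.toNNReal C) (fun x y => ?_)).continuous
  rw [Real.dist_eq]
  have h1 := hdiff x y
  have h2 := hdiff y x
  have hsym : N (y - x) = N (x - y) := by rw [← isnorm_neg hN (x - y), neg_sub]
  rw [hsym] at h2
  have hb := isnorm_bound hN (x - y)
  have hd1 : |(x - y).1| ≤ dist x y := by
    rw [Prod.dist_eq, Real.dist_eq, Real.dist_eq, Prod.fst_sub]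
    exact le_max_left _ _
  have hd2 : |(x - y).2| ≤ dist x y := by
    rw [Prod.dist_eq, Real.dist_eq, Real.dist_eq, Prod.snd_sub]
    exact le_max_right _ _
  have hK : (Real.toNNReal C : ℝ) = C := Real.coe_toNNReal _ hC0
  rw [hK]
  have hN1 : 0 ≤ N ((1, 0) : ℝ × ℝ) := isnorm_nonneg hN _
  have hN2 : 0 ≤ N ((0, 1) : ℝ × ℝ) := isnorm_nonneg hN _
  have : N (x - y) ≤ C * dist x y := by
    calc N (x - y) ≤ |(x - y).1| * N (1, 0) + |(x - y).2| * N (0, 1) := hb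
      _ ≤ dist x y * N (1, 0) + dist x y * N (0, 1) := by
          gcongr
      _ = C * dist x y := by ring
  rw [abs_sub_le_iff]
  constructor <;> linarith

/-- Triangle construction: for any norm on `ℝ²`, if `|β - γ| ≤ α ≤ β + γ` with
`γ = N (a - b) > 0` and `α, β ≥ 0`, there is `c` with `N (a - c) = β`, `N (b - c) = α`. -/
theorem exists_triangle (N : ℝ × ℝ → ℝ) (hN : IsNorm N)
    (a b : ℝ × ℝ) (γ α β : ℝ) (hγ : N (a - b) = γ) (hγpos : 0 < γ)
    (hα : 0 ≤ α) (hβ : 0 ≤ β) (h1 : |β - γ| ≤ α) (h2 : α ≤ β + γ) :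
    ∃ c : ℝ × ℝ, N (a - c) = β ∧ N (b - c) = α := by
  have hγne : γ ≠ 0 := ne_of_gt hγpos
  set u : ℝ × ℝ := γ⁻¹ • (b - a) with hudef
  have hba' : N (b - a) = γ := by
    rw [← isnorm_neg hN (b - a), neg_sub, hγ]
  have hu : N u = 1 := by
    rw [hudef, hN.smul_eq, hba', abs_of_pos (inv_pos.mpr hγpos)]
    field_simp
  have hba : b - a = γ • u := by
    rw [hudef, smul_smul, mul_inv_cancel₀ hγne, one_smul]
  set w : ℝ → ℝ × ℝ := fun θ =>
    (Real.cos θ * u.1 - Real.sin θ * u.2, Real.sin θ * u.1 + Real.cos θ * u.2) with hwdef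
  have hwne : ∀ θ, N (w θ) ≠ 0 := by
    intro θ h
    have hw0 := hN.eq_zero_of _ h
    have h1' : Real.cos θ * u.1 - Real.sin θ * u.2 = 0 := congrArg Prod.fst hw0
    have h2' : Real.sin θ * u.1 + Real.cos θ * u.2 = 0 := congrArg Prod.snd hw0
    have hs := Real.sin_sq_add_cos_sq θ
    have hu1 : u.1 = 0 := by nlinarith [sq_nonneg u.1, sq_nonneg u.2]
    have hu2 : u.2 = 0 := by nlinarith [sq_nonneg u.1, sq_nonneg u.2]
    have : u = 0 := Prod.ext hu1 hu2
    rw [this, isnorm_zero hN] at hu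
    norm_num at hu
  have hwpos : ∀ θ, 0 < N (w θ) := fun θ =>
    lt_of_le_of_ne (isnorm_nonneg hN _) (Ne.symm (hwne θ))
  set c : ℝ → ℝ × ℝ := fun θ => a + (β / N (w θ)) • w θ with hcdef
  have hac : ∀ θ, N (a - c θ) = β := by
    intro θ
    have heq : a - c θ = (-(β / N (w θ))) • w θ := by
      rw [hcdef]
      simp [neg_smul]
    rw [heq, hN.smul_eq, abs_neg, abs_div, abs_of_nonneg hβ,
      abs_of_pos (hwpos θ), div_mul_cancel₀ _ (hwne θ)]
  have hw : Continuous w := by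
    rw [hwdef]
    fun_prop
  have hNw : Continuous fun θ => N (w θ) := (isnorm_continuous hN).comp hw
  have hcont : Continuous c := by
    rw [hcdef]
    exact continuous_const.add ((continuous_const.div hNw hwne).smul hw)
  have hf : Continuous fun θ => N (b - c θ) :=
    (isnorm_continuous hN).comp (continuous_const.sub hcont)
  have hw0 : w 0 = u := by
    rw [hwdef]
    simp
  have hwpi : w Real.pi = -u := by
    rw [hwdef]
    simp [Prod.ext_iff]
  have hNu' : N (-u) = 1 := by rw [isnorm_neg hN, hu]
  have f0 : N (b - c 0) = |γ - β| := by
    have : b - c 0 = (γ - β) • u := by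
      rw [hcdef]
      simp only [hw0, hu]
      rw [div_one, sub_smul]
      rw [← hba]
      abel
    rw [this, hN.smul_eq, hu, mul_one]
  have fpi : N (b - c Real.pi) = γ + β := by
    have : b - c Real.pi = (γ + β) • u := by
      rw [hcdef]
      simp only [hwpi, hNu']
      rw [div_one, add_smul]
      rw [← hba]
      simp [smul_neg]
      abel
    rw [this, hN.smul_eq, hu, mul_one, abs_of_nonneg (by linarith)]
  have hmem : α ∈ Set.Icc (N (b - c 0)) (N (b - c Real.pi)) := by
    rw [f0, fpi]
    exact ⟨by rwa [abs_sub_comm] at h1, by linarith⟩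
  obtain ⟨θ, _, hfθ⟩ :=
    intermediate_value_Icc (le_of_lt Real.pi_pos) hf.continuousOn hmem
  exact ⟨c θ, hac θ, hfθ⟩
end

section
/- Let ‖·‖ be a URTC-norm on ℝ² with unit sphere S. Then for every z ∈ S there exists a unique point w ∈ S such that ‖z − w‖ = 1 and the triple (0, z, w) is positively oriented, i.e., det(z, w) = z₁w₂ − z₂w₁ > 0. -/
/-- For a URTC-norm, every point `z` of the unit sphere has a unique "counterclockwise
neighbour": a unique `w` on the sphere with `N (z - w) = 1` and `det (z, w) > 0`. -/
theorem existsUnique_ccw_neighbour (N : ℝ × ℝ → ℝ) (hN : IsNorm N) (hU : IsURTC N) :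
    ∀ z : ℝ × ℝ, N z = 1 →
      ∃! w : ℝ × ℝ, N w = 1 ∧ N (z - w) = 1 ∧ 0 < z.1 * w.2 - z.2 * w.1 := by
  intro z hz
  have hN0 : N 0 = 0 := by simpa using hN.smul_eq 0 0
  have hneg : ∀ x : ℝ × ℝ, N (-x) = N x := by
    intro x; simpa using hN.smul_eq (-1) x
  have hz0 : z ≠ 0 := by
    intro h; rw [h, hN0] at hz; norm_num at hz
  have hset := hU z 0 (by simpa using hz)
  set A : Set (ℝ × ℝ) := {x | N (z - x) = 1 ∧ N (0 - x) = 1} with hA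
  have hmem : ∀ x, x ∈ A ↔ N x = 1 ∧ N (z - x) = 1 := by
    intro x
    constructor
    · rintro ⟨h1, h2⟩
      rw [zero_sub, hneg] at h2
      exact ⟨h2, h1⟩
    · rintro ⟨h1, h2⟩
      exact ⟨h2, by rw [zero_sub, hneg]; exact h1⟩
  have hrefl : ∀ x, x ∈ A → z - x ∈ A := by
    intro x hx
    rw [hmem] at hx ⊢
    exact ⟨hx.2, by simpa using hx.1⟩
  -- det is nonzero on solutions
  have hdet : ∀ x, x ∈ A → z.1 * x.2 - z.2 * x.1 ≠ 0 := by
    intro x hx hd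
    rw [hmem] at hx
    obtain ⟨hx1, hx2⟩ := hx
    obtain ⟨t, ht⟩ : ∃ t : ℝ, x = t • z := by
      by_cases h1 : z.1 = 0
      · have h2 : z.2 ≠ 0 := fun h2 => hz0 (Prod.ext h1 h2)
        have hx1' : x.1 = 0 := by
          have hmul : z.2 * x.1 = 0 := by linear_combination x.2 * h1 - hd
          exact (mul_eq_zero.mp hmul).resolve_left h2
        exact ⟨x.2 / z.2, Prod.ext (by simp [h1, hx1']) (by simp; field_simp)⟩
      · refine ⟨x.1 / z.1, Prod.ext (by simp; field_simp) ?_⟩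
        simp only [Prod.smul_snd, smul_eq_mul]
        field_simp
        nlinarith [hd]
    have habs : |t| = 1 := by
      rw [ht, hN.smul_eq, hz, mul_one] at hx1; exact hx1
    rcases (abs_eq (by norm_num : (0:ℝ) ≤ 1)).mp habs with h | h
    · rw [ht, h, one_smul, sub_self, hN0] at hx2; norm_num at hx2
    · rw [ht, h] at hx2
      have h2z : z - (-1 : ℝ) • z = (2:ℝ) • z := by module
      rw [h2z, hN.smul_eq, hz] at hx2
      norm_num at hx2
  -- the reflection has no fixed point on A
  have hnofix : ∀ x, x ∈ A → z - x ≠ x := by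
    intro x hx heq
    have hx1 : N x = 1 := ((hmem x).mp hx).1
    have hzx : z = (2:ℝ) • x := by
      rw [sub_eq_iff_eq_add.mp heq]; module
    rw [hzx, hN.smul_eq, hx1] at hz
    norm_num at hz
  obtain ⟨x₁, x₂, hne, hAeq⟩ := Set.encard_eq_two.mp hset
  have hx₁A : x₁ ∈ A := by rw [hAeq]; exact Set.mem_insert _ _
  have hx₂A : x₂ ∈ A := by rw [hAeq]; exact Set.mem_insert_of_mem _ rfl
  have hx₂eq : z - x₁ = x₂ := by
    have h1 : z - x₁ ∈ A := hrefl _ hx₁A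
    rw [hAeq] at h1
    rcases h1 with h1 | h1
    · exact absurd h1 (hnofix _ hx₁A)
    · exact h1
  have hdsum : z.1 * x₂.2 - z.2 * x₂.1 = -(z.1 * x₁.2 - z.2 * x₁.1) := by
    rw [← hx₂eq]; simp only [Prod.fst_sub, Prod.snd_sub]; ring
  have hd₁ := hdet _ hx₁A
  have key : ∀ w, (N w = 1 ∧ N (z - w) = 1 ∧ 0 < z.1 * w.2 - z.2 * w.1) → w ∈ A :=
    fun w hw => (hmem w).mpr ⟨hw.1, hw.2.1⟩
  rcases lt_or_gt_of_ne hd₁ with hneg1 | hpos1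
  · -- x₂ is the ccw neighbour
    refine ⟨x₂, ⟨((hmem x₂).mp hx₂A).1, ((hmem x₂).mp hx₂A).2, by rw [hdsum]; linarith⟩, ?_⟩
    intro w hw
    have hwA := key w hw
    rw [hAeq] at hwA
    rcases hwA with h | h
    · exfalso; rw [h] at hw; linarith [hw.2.2]
    · exact h
  · -- x₁ is the ccw neighbour
    refine ⟨x₁, ⟨((hmem x₁).mp hx₁A).1, ((hmem x₁).mp hx₁A).2, hpos1⟩, ?_⟩
    intro w hw
    have hwA := key w hw
    rw [hAeq] at hwA
    rcases hwA with h | h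
    · exact h
    · exfalso; rw [h] at hw; have := hw.2.2; rw [hdsum] at this; linarith
end

section
/- Let ‖·‖ be a URTC-norm on ℝ² with unit sphere S, and let f : S → S be the map sending each z ∈ S to the unique point f(z) ∈ S with ‖z − f(z)‖ = 1 and det(z, f(z)) > 0. Then f is a bijection of S onto itself, whose inverse g satisfies ‖z − g(z)‖ = 1 and det(g(z), z) > 0 for all z ∈ S. -/
/-- For a URTC-norm, the map `f` sending each unit vector `z` to its counterclockwise
unit-distance neighbour is a bijection of the unit sphere onto itself, and it has
an inverse `g` on the sphere satisfying `N (z - g z) = 1` and `det (g z, z) > 0`. -/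
theorem ccw_map_bijective (N : ℝ × ℝ → ℝ) (hN : IsNorm N) (hU : IsURTC N)
    (f : ℝ × ℝ → ℝ × ℝ)
    (hf : ∀ z : ℝ × ℝ, N z = 1 →
      N (f z) = 1 ∧ N (z - f z) = 1 ∧ 0 < z.1 * (f z).2 - z.2 * (f z).1) :
    Set.BijOn f {x : ℝ × ℝ | N x = 1} {x : ℝ × ℝ | N x = 1} ∧
      ∃ g : ℝ × ℝ → ℝ × ℝ,
        Set.MapsTo g {x : ℝ × ℝ | N x = 1} {x : ℝ × ℝ | N x = 1} ∧
        Set.InvOn g f {x : ℝ × ℝ | N x = 1} {x : ℝ × ℝ | N x = 1} ∧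
        ∀ z : ℝ × ℝ, N z = 1 →
          N (z - g z) = 1 ∧ 0 < (g z).1 * z.2 - (g z).2 * z.1 := by
  have hneg : ∀ v : ℝ × ℝ, N (-v) = N v := by
    intro v
    have h := hN.smul_eq (-1) v
    simpa using h
  -- uniqueness of the counterclockwise unit-distance neighbour
  have uniq : ∀ w x y : ℝ × ℝ, N w = 1 →
      N x = 1 → N (w - x) = 1 → 0 < w.1 * x.2 - w.2 * x.1 →
      N y = 1 → N (w - y) = 1 → 0 < w.1 * y.2 - w.2 * y.1 → x = y := by
    intro w x y hw hx hwx hdx hy hwy hdy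
    have hw0 : N (w - 0) = 1 := by simpa using hw
    have hcard := hU w 0 hw0
    set T := {v : ℝ × ℝ | N (w - v) = 1 ∧ N (0 - v) = 1} with hT
    have mem_T : ∀ v : ℝ × ℝ, v ∈ T ↔ N (w - v) = 1 ∧ N v = 1 := by
      intro v
      simp only [hT, Set.mem_setOf_eq, zero_sub, hneg]
    have hxT : x ∈ T := (mem_T x).2 ⟨hwx, hx⟩
    have hyT : y ∈ T := (mem_T y).2 ⟨hwy, hy⟩
    have hx'T : w - x ∈ T := by
      rw [mem_T]
      constructor
      · simpa using hx
      · exact hwx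
    have hne : x ≠ w - x := by
      intro h
      have hw2 : w = (2 : ℝ) • x := by
        have hxx : w = x + x := sub_eq_iff_eq_add.mp h.symm
        rw [hxx, two_smul]
      have : N w = 2 := by
        rw [hw2, hN.smul_eq]
        rw [hx]
        norm_num
      rw [hw] at this
      norm_num at this
    have hsub : ({x, w - x} : Set (ℝ × ℝ)) ⊆ T := by
      intro v hv
      rcases hv with hv | hv
      · exact hv ▸ hxT
      · simp only [Set.mem_singleton_iff] at hv
        exact hv ▸ hx'T
    have hpair : ({x, w - x} : Set (ℝ × ℝ)).encard = 2 := Set.encard_pair hne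
    have hTfin : T.Finite := by
      rw [← Set.encard_ne_top_iff, hcard]
      simp
    have hTeq : ({x, w - x} : Set (ℝ × ℝ)) = T := by
      exact hTfin.eq_of_subset_of_encard_le' hsub (by rw [hcard, hpair])
    have hymem : y ∈ ({x, w - x} : Set (ℝ × ℝ)) := hTeq ▸ hyT
    rcases hymem with h | h
    · exact h.symm
    · exfalso
      simp only [Set.mem_singleton_iff] at h
      have h1 : y.1 = w.1 - x.1 := by rw [h]; rfl
      have h2 : y.2 = w.2 - x.2 := by rw [h]; rfl
      rw [h1, h2] at hdy
      nlinarith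
  have key2 : ∀ z : ℝ × ℝ, N z = 1 → f (f z) = f z - z := by
    intro z hz
    obtain ⟨h1, h2, h3⟩ := hf z hz
    obtain ⟨h4, h5, h6⟩ := hf (f z) h1
    apply uniq (f z) _ _ h1 h4 h5 h6
    · have : f z - z = -(z - f z) := by ring_nf -- maybe use neg_sub
      rw [neg_sub] at this
      rw [← neg_sub z (f z), hneg]
      exact h2
    · have : f z - (f z - z) = z := by abel
      rw [this]
      exact hz
    · have e1 : (f z - z).1 = (f z).1 - z.1 := rfl
      have e2 : (f z - z).2 = (f z).2 - z.2 := rfl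
      rw [e1, e2]
      nlinarith
  have hodd : ∀ z : ℝ × ℝ, N z = 1 → f (-z) = -f z := by
    intro z hz
    obtain ⟨h1, h2, h3⟩ := hf z hz
    have hnz : N (-z) = 1 := by rw [hneg]; exact hz
    obtain ⟨h4, h5, h6⟩ := hf (-z) hnz
    apply uniq (-z) _ _ hnz h4 h5 h6
    · rw [hneg]; exact h1
    · have : -z - -f z = -(z - f z) := by abel
      rw [this, hneg]
      exact h2
    · have e1 : (-z).1 = -z.1 := rfl
      have e2 : (-z).2 = -z.2 := rfl
      have e3 : (-f z).1 = -(f z).1 := rfl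
      have e4 : (-f z).2 = -(f z).2 := rfl
      rw [e1, e2, e3, e4]
      nlinarith
  have f3 : ∀ z : ℝ × ℝ, N z = 1 → f (f (f z)) = -z := by
    intro z hz
    have h1 := (hf z hz).1
    have e1 := key2 z hz
    have e2 := key2 (f z) h1
    rw [e1] at e2 ⊢
    rw [e2]
    abel
  set S : Set (ℝ × ℝ) := {x : ℝ × ℝ | N x = 1} with hS
  have memS : ∀ v : ℝ × ℝ, v ∈ S ↔ N v = 1 := fun v => Iff.rfl
  have hmf : Set.MapsTo f S S := fun z hz => (hf z hz).1
  set g : ℝ × ℝ → ℝ × ℝ := fun z => f (f (-z)) with hg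
  have hmg : Set.MapsTo g S S := by
    intro z hz
    have hnz : N (-z) = 1 := by rw [hneg]; exact hz
    exact (hf _ ((hf _ hnz).1)).1
  have hgf : ∀ z : ℝ × ℝ, N z = 1 → g (f z) = z := by
    intro z hz
    have hnz : N (-z) = 1 := by rw [hneg]; exact hz
    have : g (f z) = f (f (f (-z))) := by
      rw [hg]
      simp only
      rw [← hodd z hz]
    rw [this, f3 (-z) hnz, neg_neg]
  have hfg : ∀ z : ℝ × ℝ, N z = 1 → f (g z) = z := by
    intro z hz
    have hnz : N (-z) = 1 := by rw [hneg]; exact hz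
    have : f (g z) = f (f (f (-z))) := rfl
    rw [this, f3 (-z) hnz, neg_neg]
  constructor
  · refine ⟨hmf, ?_, ?_⟩
    · intro a ha b hb hab
      have := hgf a ha
      rw [hab, hgf b hb] at this
      exact this.symm
    · intro y hy
      exact ⟨g y, hmg hy, hfg y hy⟩
  · refine ⟨g, hmg, ⟨fun z hz => hgf z hz, fun z hz => hfg z hz⟩, ?_⟩
    intro z hz
    have hgz : N (g z) = 1 := hmg hz
    obtain ⟨h1, h2, h3⟩ := hf (g z) hgz
    rw [hfg z hz] at h2 h3
    constructor
    · rw [← hneg, neg_sub]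
      exact h2
    · exact h3
end

section
/- Let ‖·‖ be a URTC-norm on ℝ² with unit sphere S, and let f : S → S be the map sending each z ∈ S to the unique point f(z) ∈ S with ‖z − f(z)‖ = 1 and det(z, f(z)) > 0. Then f is continuous. -/
namespace URTCAux

variable {N : ℝ × ℝ → ℝ}

lemma norm_zero (hN : IsNorm N) : N 0 = 0 := by
  have := hN.smul_eq 0 0
  simpa using this

lemma norm_neg (hN : IsNorm N) (x : ℝ × ℝ) : N (-x) = N x := by
  have := hN.smul_eq (-1) x
  simpa using this

lemma norm_nonneg' (hN : IsNorm N) (x : ℝ × ℝ) : 0 ≤ N x := by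
  have h := hN.add_le x (-x)
  rw [add_neg_cancel, norm_zero hN, norm_neg hN] at h
  linarith

lemma norm_sub_abs (hN : IsNorm N) (x y : ℝ × ℝ) : |N x - N y| ≤ N (x - y) := by
  have h1 : N x ≤ N (x - y) + N y := by
    have := hN.add_le (x - y) y
    simpa using this
  have h2 : N y ≤ N (x - y) + N x := by
    have := hN.add_le (y - x) x
    have hneg : N (y - x) = N (x - y) := by
      rw [← norm_neg hN (y - x)]; congr 1; abel
    simpa [hneg] using this
  rw [abs_sub_le_iff]
  constructor <;> linarith

lemma norm_le (hN : IsNorm N) (x : ℝ × ℝ) :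
    N x ≤ (N (1, 0) + N (0, 1)) * ‖x‖ := by
  have hx : x = x.1 • ((1 : ℝ), (0 : ℝ)) + x.2 • ((0 : ℝ), (1 : ℝ)) := by
    ext <;> simp
  have h1 : N (x.1 • ((1 : ℝ), (0 : ℝ))) = |x.1| * N (1, 0) := hN.smul_eq _ _
  have h2 : N (x.2 • ((0 : ℝ), (1 : ℝ))) = |x.2| * N (0, 1) := hN.smul_eq _ _
  have h3 := hN.add_le (x.1 • ((1 : ℝ), (0 : ℝ))) (x.2 • ((0 : ℝ), (1 : ℝ)))
  rw [← hx, h1, h2] at h3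
  have hb1 : |x.1| ≤ ‖x‖ := by simpa [Real.norm_eq_abs] using norm_fst_le x
  have hb2 : |x.2| ≤ ‖x‖ := by simpa [Real.norm_eq_abs] using norm_snd_le x
  have hp1 : 0 ≤ N (1, 0) := norm_nonneg' hN _
  have hp2 : 0 ≤ N (0, 1) := norm_nonneg' hN _
  nlinarith

lemma continuous_norm' (hN : IsNorm N) : Continuous N := by
  rw [Metric.continuous_iff]
  intro b ε hε
  set C := N (1, 0) + N (0, 1)
  have hC : 0 ≤ C := by
    have := norm_nonneg' hN ((1 : ℝ), (0 : ℝ))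
    have := norm_nonneg' hN ((0 : ℝ), (1 : ℝ))
    positivity
  refine ⟨ε / (C + 1), by positivity, fun a ha => ?_⟩
  have h1 : |N a - N b| ≤ N (a - b) := norm_sub_abs hN a b
  have h2 : N (a - b) ≤ C * ‖a - b‖ := norm_le hN _
  have h3 : ‖a - b‖ = dist a b := (dist_eq_norm a b).symm
  rw [Real.dist_eq]
  have : C * dist a b ≤ C * (ε / (C + 1)) := by
    apply mul_le_mul_of_nonneg_left ha.le hC
  calc |N a - N b| ≤ C * dist a b := by rw [← h3]; linarith
    _ ≤ C * (ε / (C + 1)) := this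
    _ < (C + 1) * (ε / (C + 1)) := by
        apply mul_lt_mul_of_pos_right (by linarith) (by positivity)
    _ = ε := by field_simp

lemma exists_lower (hN : IsNorm N) : ∃ c > 0, ∀ x : ℝ × ℝ, c * ‖x‖ ≤ N x := by
  have hcomp : IsCompact (Metric.sphere (0 : ℝ × ℝ) 1) := isCompact_sphere 0 1
  have hne : (Metric.sphere (0 : ℝ × ℝ) 1).Nonempty := by
    exact NormedSpace.sphere_nonempty.2 (by norm_num)
  obtain ⟨x₀, hx₀, hmin⟩ := hcomp.exists_isMinOn hne ((continuous_norm' hN).continuousOn)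
  have hx₀ne : x₀ ≠ 0 := by
    intro h
    rw [h] at hx₀
    simp at hx₀
  have hc : 0 < N x₀ := by
    rcases lt_or_eq_of_le (norm_nonneg' hN x₀) with h | h
    · exact h
    · exact absurd (hN.eq_zero_of x₀ h.symm) hx₀ne
  refine ⟨N x₀, hc, fun x => ?_⟩
  rcases eq_or_ne x 0 with rfl | hx
  · simp [norm_zero hN]
  · have hnx : 0 < ‖x‖ := norm_pos_iff.2 hx
    have hy : ‖x‖⁻¹ • x ∈ Metric.sphere (0 : ℝ × ℝ) 1 := by
      simp [norm_smul, abs_of_pos (inv_pos.2 hnx), inv_mul_cancel₀ hnx.ne']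
    have h1 : N x₀ ≤ N (‖x‖⁻¹ • x) := hmin hy
    rw [hN.smul_eq, abs_of_pos (inv_pos.2 hnx)] at h1
    have := mul_le_mul_of_nonneg_left h1 hnx.le
    calc N x₀ * ‖x‖ = ‖x‖ * N x₀ := by ring
      _ ≤ ‖x‖ * (‖x‖⁻¹ * N x) := this
      _ = N x := by field_simp

/-- uniqueness of the ccw neighbour -/
lemma unique_ccw (hN : IsNorm N) (hU : IsURTC N) (f : ℝ × ℝ → ℝ × ℝ)
    (hf : ∀ z : ℝ × ℝ, N z = 1 →
      N (f z) = 1 ∧ N (z - f z) = 1 ∧ 0 < z.1 * (f z).2 - z.2 * (f z).1)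
    (z : ℝ × ℝ) (hz : N z = 1) (w : ℝ × ℝ) (hw : N w = 1) (hzw : N (z - w) = 1)
    (hdet : 0 ≤ z.1 * w.2 - z.2 * w.1) : w = f z := by
  obtain ⟨hf1, hf2, hf3⟩ := hf z hz
  have hA : {x : ℝ × ℝ | N (z - x) = 1 ∧ N ((0 : ℝ × ℝ) - x) = 1}.encard = 2 := by
    apply hU z 0
    simpa using hz
  obtain ⟨a, b, hab, hAeq⟩ := Set.encard_eq_two.1 hA
  have hmem : ∀ x : ℝ × ℝ, N (z - x) = 1 → N x = 1 → x = a ∨ x = b := by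
    intro x h1 h2
    have : x ∈ {x : ℝ × ℝ | N (z - x) = 1 ∧ N ((0 : ℝ × ℝ) - x) = 1} := by
      refine ⟨h1, ?_⟩
      rw [zero_sub, norm_neg hN, h2]
    rw [hAeq] at this
    simpa using this
  have hfz : f z = a ∨ f z = b := hmem (f z) hf2 hf1
  have hzfz : z - f z = a ∨ z - f z = b := by
    apply hmem
    · simp [hf1]
    · exact hf2
  have hne : f z ≠ z - f z := by
    intro h
    have h' : z = f z + f z := sub_eq_iff_eq_add.1 h.symm
    have h2 : z = (2 : ℝ) • f z := by rw [two_smul]; exact h'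
    have hs := hN.smul_eq 2 (f z)
    rw [← h2, hz, hf1] at hs
    norm_num at hs
  have hwmem : w = a ∨ w = b := hmem w hzw hw
  have hwcases : w = f z ∨ w = z - f z := by
    rcases hfz with h1 | h1 <;> rcases hzfz with h2 | h2 <;>
      rcases hwmem with h3 | h3 <;>
      first
        | (exact absurd (h1.trans h2.symm) hne)
        | (left; exact h3.trans h1.symm)
        | (right; exact h3.trans h2.symm)
  rcases hwcases with h | h
  · exact h
  · exfalso
    rw [h] at hdet
    simp only [Prod.fst_sub, Prod.snd_sub] at hdet
    nlinarith

end URTCAux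

open URTCAux Filter Topology in
/-- For a URTC-norm, the map `f` sending each unit vector `z` to its counterclockwise
unit-distance neighbour is continuous on the unit sphere. -/
theorem ccw_map_continuous (N : ℝ × ℝ → ℝ) (hN : IsNorm N) (hU : IsURTC N)
    (f : ℝ × ℝ → ℝ × ℝ)
    (hf : ∀ z : ℝ × ℝ, N z = 1 →
      N (f z) = 1 ∧ N (z - f z) = 1 ∧ 0 < z.1 * (f z).2 - z.2 * (f z).1) :
    ContinuousOn f {x : ℝ × ℝ | N x = 1} := by
  have contN : Continuous N := continuous_norm' hN
  obtain ⟨c, hc, hlow⟩ := exists_lower hN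
  -- the sphere is compact
  have hSclosed : IsClosed {x : ℝ × ℝ | N x = 1} := isClosed_eq contN continuous_const
  have hSsub : {x : ℝ × ℝ | N x = 1} ⊆ Metric.closedBall 0 c⁻¹ := by
    intro x hx
    simp only [Set.mem_setOf_eq] at hx
    rw [Metric.mem_closedBall, dist_zero_right]
    calc ‖x‖ = c⁻¹ * (c * ‖x‖) := by field_simp
      _ ≤ c⁻¹ * 1 := by
          apply mul_le_mul_of_nonneg_left _ (inv_pos.2 hc).le
          rw [← hx]; exact hlow x
      _ = c⁻¹ := mul_one _
  have hScomp : IsCompact {x : ℝ × ℝ | N x = 1} :=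
    (isCompact_closedBall (0 : ℝ × ℝ) c⁻¹).of_isClosed_subset hSclosed hSsub
  intro z hz
  simp only [Set.mem_setOf_eq] at hz
  rw [ContinuousWithinAt]
  rw [tendsto_iff_seq_tendsto]
  intro u hu
  have hmem : ∀ᶠ n in atTop, N (u n) = 1 := hu.eventually eventually_mem_nhdsWithin
  have huz : Tendsto u atTop (𝓝 z) := hu.mono_right nhdsWithin_le_nhds
  set w : ℕ → ℝ × ℝ := fun n => if N (u n) = 1 then f (u n) else f z with hwdef
  have hwS : ∀ n, N (w n) = 1 := by
    intro n
    by_cases h : N (u n) = 1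
    · simp only [hwdef, if_pos h]; exact (hf _ h).1
    · simp only [hwdef, if_neg h]; exact (hf z hz).1
  have hweq : ∀ᶠ n in atTop, w n = f (u n) := hmem.mono fun n h => if_pos h
  have key : Tendsto w atTop (𝓝 (f z)) := by
    apply tendsto_of_subseq_tendsto
    intro ns hns
    obtain ⟨x, hxS, φ, hφ, hconv⟩ := hScomp.tendsto_subseq (x := w ∘ ns) fun n => hwS (ns n)
    refine ⟨φ, ?_⟩
    have hm : Tendsto (fun n => ns (φ n)) atTop atTop := hns.comp hφ.tendsto_atTop
    have hum : Tendsto (fun n => u (ns (φ n))) atTop (𝓝 z) := huz.comp hm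
    have hmm : ∀ᶠ n in atTop, N (u (ns (φ n))) = 1 := hm.eventually hmem
    have hNx : N x = 1 := hxS
    have hconv' : Tendsto (fun n => w (ns (φ n))) atTop (𝓝 x) := hconv
    have h2 : N (z - x) = 1 := by
      have ht : Tendsto (fun n => N (u (ns (φ n)) - w (ns (φ n)))) atTop (𝓝 (N (z - x))) :=
        (contN.tendsto _).comp (hum.sub hconv')
      have heq : ∀ᶠ n in atTop, N (u (ns (φ n)) - w (ns (φ n))) = 1 :=
        hmm.mono fun n h => by
          have hw' : w (ns (φ n)) = f (u (ns (φ n))) := if_pos h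
          rw [hw']; exact (hf _ h).2.1
      exact tendsto_nhds_unique (ht.congr' heq) tendsto_const_nhds
    have h3 : 0 ≤ z.1 * x.2 - z.2 * x.1 := by
      have ht : Tendsto
          (fun n => (u (ns (φ n))).1 * (w (ns (φ n))).2 - (u (ns (φ n))).2 * (w (ns (φ n))).1)
          atTop (𝓝 (z.1 * x.2 - z.2 * x.1)) := by
        have h1 := (continuous_fst.tendsto z).comp hum
        have h2' := (continuous_snd.tendsto z).comp hum
        have h3' := (continuous_fst.tendsto x).comp hconv'
        have h4' := (continuous_snd.tendsto x).comp hconv'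
        exact (h1.mul h4').sub (h2'.mul h3')
      have hpos : ∀ᶠ n in atTop,
          0 ≤ (u (ns (φ n))).1 * (w (ns (φ n))).2 - (u (ns (φ n))).2 * (w (ns (φ n))).1 :=
        hmm.mono fun n h => by
          have := (hf _ h).2.2
          have hw' : w (ns (φ n)) = f (u (ns (φ n))) := if_pos h
          rw [hw']
          linarith
      exact ge_of_tendsto ht hpos
    have hx : x = f z := unique_ccw hN hU f hf z hz x hNx h2 h3
    rw [← hx]
    exact hconv
  exact key.congr' hweq
end

section
/- Let ‖·‖ be a URTC-norm on ℝ², let d > 0, and let b₁, b₂ ∈ ℝ² satisfy ‖b₁‖ = ‖b₂‖ = ‖b₁ − b₂‖ = d. Then there exist points c₁, c₂, c₃ ∈ ℝ² such that (0, b₁, b₂, b₁ + b₂, c₁, c₂, c₃) is a d-probe. -/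
/-- A `d`-probe: a 7-tuple of points with the eleven prescribed pairwise distances
all equal to `d`. -/
def IsProbe (N : ℝ × ℝ → ℝ) (d : ℝ) (a b₁ b₂ b₃ c₁ c₂ c₃ : ℝ × ℝ) : Prop :=
  N (a - b₁) = d ∧ N (a - b₂) = d ∧ N (b₁ - b₂) = d ∧ N (b₁ - b₃) = d ∧
  N (b₂ - b₃) = d ∧ N (a - c₁) = d ∧ N (a - c₂) = d ∧ N (c₁ - c₂) = d ∧
  N (c₁ - c₃) = d ∧ N (c₂ - c₃) = d ∧ N (b₃ - c₃) = d

namespace ProbeAux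

variable {N : ℝ × ℝ → ℝ}

lemma zero' (hN : IsNorm N) : N 0 = 0 := by
  have h := hN.smul_eq 0 0; simpa using h

lemma neg' (hN : IsNorm N) (x : ℝ × ℝ) : N (-x) = N x := by
  have h := hN.smul_eq (-1) x; simpa using h

lemma nonneg' (hN : IsNorm N) (x : ℝ × ℝ) : 0 ≤ N x := by
  have h := hN.add_le x (-x)
  rw [add_neg_cancel, zero' hN, neg' hN] at h
  linarith

lemma le_C (hN : IsNorm N) (x : ℝ × ℝ) : N x ≤ (N (1,0) + N (0,1)) * ‖x‖ := by
  have hx : x = x.1 • ((1:ℝ),(0:ℝ)) + x.2 • ((0:ℝ),(1:ℝ)) := by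
    ext <;> simp
  calc N x = N (x.1 • ((1:ℝ),(0:ℝ)) + x.2 • ((0:ℝ),(1:ℝ))) := by rw [← hx]
    _ ≤ N (x.1 • ((1:ℝ),(0:ℝ))) + N (x.2 • ((0:ℝ),(1:ℝ))) := hN.add_le _ _
    _ = |x.1| * N (1,0) + |x.2| * N (0,1) := by rw [hN.smul_eq, hN.smul_eq]
    _ ≤ ‖x‖ * N (1,0) + ‖x‖ * N (0,1) := by
        have h1 : |x.1| ≤ ‖x‖ := by simpa [Real.norm_eq_abs] using norm_fst_le x
        have h2 : |x.2| ≤ ‖x‖ := by simpa [Real.norm_eq_abs] using norm_snd_le x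
        have := nonneg' hN ((1:ℝ),(0:ℝ)); have := nonneg' hN ((0:ℝ),(1:ℝ))
        nlinarith
    _ = (N (1,0) + N (0,1)) * ‖x‖ := by ring

lemma cont' (hN : IsNorm N) : Continuous N := by
  set C := N (1,0) + N (0,1) with hC
  have hC0 : 0 ≤ C := by
    have := nonneg' hN ((1:ℝ),(0:ℝ)); have := nonneg' hN ((0:ℝ),(1:ℝ)); linarith
  rw [Metric.continuous_iff]
  intro x ε hε
  refine ⟨ε / (C + 1), by positivity, fun y hy => ?_⟩
  have h1 : N y ≤ N x + N (y - x) := by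
    have h := hN.add_le x (y - x); simpa using h
  have h2 : N x ≤ N y + N (x - y) := by
    have h := hN.add_le y (x - y); simpa using h
  have h3 : N (y - x) ≤ C * ‖y - x‖ := le_C hN _
  have h4 : N (x - y) = N (y - x) := by rw [← neg' hN (x - y), neg_sub]
  have h5 : ‖y - x‖ = dist y x := (dist_eq_norm y x).symm
  rw [Real.dist_eq, abs_lt]
  have hdnn : 0 ≤ dist y x := dist_nonneg
  have hCp : (0:ℝ) < C + 1 := by linarith
  have key : dist y x * (C + 1) < ε := (lt_div_iff₀ hCp).mp hy
  rw [h5] at h3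
  constructor <;> nlinarith

lemma lower' (hN : IsNorm N) : ∃ c > 0, ∀ x : ℝ × ℝ, c * ‖x‖ ≤ N x := by
  have hcomp : IsCompact (Metric.sphere (0:ℝ×ℝ) 1) := isCompact_sphere 0 1
  have hne : (Metric.sphere (0:ℝ×ℝ) 1).Nonempty := NormedSpace.sphere_nonempty.mpr zero_le_one
  obtain ⟨z, hz, hmin⟩ := hcomp.exists_isMinOn hne (cont' hN).continuousOn
  have hz1 : ‖z‖ = 1 := by simpa using hz
  have hz0 : z ≠ 0 := by intro h; rw [h] at hz1; simp at hz1
  have hc : 0 < N z := lt_of_le_of_ne (nonneg' hN z) fun h => hz0 (hN.eq_zero_of z h.symm)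
  refine ⟨N z, hc, fun x => ?_⟩
  rcases eq_or_ne x 0 with rfl | hx
  · simp [zero' hN]
  · have hxn : (0:ℝ) < ‖x‖ := norm_pos_iff.mpr hx
    have hu : ‖x‖⁻¹ • x ∈ Metric.sphere (0:ℝ×ℝ) 1 := by
      simp [norm_smul, abs_of_pos (inv_pos.mpr hxn), inv_mul_cancel₀ (ne_of_gt hxn)]
    have h := isMinOn_iff.mp hmin _ hu
    rw [hN.smul_eq, abs_of_pos (inv_pos.mpr hxn)] at h
    calc N z * ‖x‖ ≤ (‖x‖⁻¹ * N x) * ‖x‖ := by nlinarith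
      _ = N x := by field_simp

lemma urtc_scaled (hN : IsNorm N) (hU : IsURTC N) {d : ℝ} (hd : 0 < d)
    (a b : ℝ × ℝ) (hab : N (a - b) = d) :
    {x : ℝ × ℝ | N (a - x) = d ∧ N (b - x) = d}.encard = 2 := by
  have hd0 : d ≠ 0 := ne_of_gt hd
  have hdinv : (0:ℝ) < d⁻¹ := inv_pos.mpr hd
  have hsub : ∀ u v : ℝ × ℝ, d⁻¹ • u - d⁻¹ • v = d⁻¹ • (u - v) := fun u v => (smul_sub _ _ _).symm
  have hval : ∀ u v : ℝ × ℝ, N (u - v) = d → N (d⁻¹ • u - d⁻¹ • v) = 1 := by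
    intro u v huv
    rw [hsub, hN.smul_eq, huv, abs_of_pos hdinv, inv_mul_cancel₀ hd0]
  have key : {x : ℝ × ℝ | N (a - x) = d ∧ N (b - x) = d} =
      (fun y : ℝ × ℝ => d • y) '' {x | N (d⁻¹ • a - x) = 1 ∧ N (d⁻¹ • b - x) = 1} := by
    ext x
    simp only [Set.mem_image, Set.mem_setOf_eq]
    constructor
    · rintro ⟨ha, hb⟩
      refine ⟨d⁻¹ • x, ⟨hval _ _ ha, hval _ _ hb⟩, ?_⟩
      rw [smul_smul, mul_inv_cancel₀ hd0, one_smul]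
    · rintro ⟨y, ⟨hy1, hy2⟩, rfl⟩
      constructor
      · have h : a - d • y = d • (d⁻¹ • a - y) := by
          rw [smul_sub, smul_smul, mul_inv_cancel₀ hd0, one_smul]
        rw [h, hN.smul_eq, hy1, abs_of_pos hd, mul_one]
      · have h : b - d • y = d • (d⁻¹ • b - y) := by
          rw [smul_sub, smul_smul, mul_inv_cancel₀ hd0, one_smul]
        rw [h, hN.smul_eq, hy2, abs_of_pos hd, mul_one]
  rw [key, Function.Injective.encard_image (smul_right_injective (ℝ × ℝ) hd0)]
  exact hU _ _ (hval _ _ hab)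

lemma det_ne (hN : IsNorm N) {d : ℝ} (hd : 0 < d) {u x : ℝ × ℝ}
    (hu : N u = d) (hx : N x = d) (hux : N (u - x) = d) :
    u.1 * x.2 - u.2 * x.1 ≠ 0 := by
  intro hdet
  have hu0 : u ≠ 0 := by
    intro h; rw [h, zero' hN] at hu; exact (ne_of_gt hd) hu.symm
  have hcases : u.1 ≠ 0 ∨ u.2 ≠ 0 := by
    by_contra h
    push_neg at h
    exact hu0 (Prod.ext h.1 h.2)
  obtain ⟨l, hl⟩ : ∃ l : ℝ, x = l • u := by
    rcases hcases with h | h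
    · refine ⟨x.1 / u.1, ?_⟩
      have : x.2 = x.1 / u.1 * u.2 := by field_simp; nlinarith [hdet]
      ext
      · simp [div_mul_cancel₀, h]
      · simpa using this
    · refine ⟨x.2 / u.2, ?_⟩
      have : x.1 = x.2 / u.2 * u.1 := by field_simp; nlinarith [hdet]
      ext
      · simpa using this
      · simp [div_mul_cancel₀, h]
  rw [hl, hN.smul_eq, hu] at hx
  have habs : |l| = 1 := by
    have : |l| * d = 1 * d := by rw [hx, one_mul]
    exact mul_right_cancel₀ (ne_of_gt hd) this
  rcases abs_eq (le_of_lt one_pos) |>.mp habs with h | h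
  · rw [hl, h, one_smul, sub_self, zero' hN] at hux
    exact (ne_of_gt hd) hux.symm
  · rw [hl, h] at hux
    have h2 : u - (-1 : ℝ) • u = (2:ℝ) • u := by
      rw [neg_one_smul, sub_neg_eq_add, two_smul]
    rw [h2, hN.smul_eq, hu] at hux
    rw [abs_of_pos (by norm_num : (0:ℝ) < 2)] at hux
    linarith

lemma apex_exists (hN : IsNorm N) (hU : IsURTC N) {d : ℝ} (hd : 0 < d) (s : ℝ) (hs : s ≠ 0)
    {u : ℝ × ℝ} (hu : N u = d) :
    ∃ x : ℝ × ℝ, N x = d ∧ N (u - x) = d ∧ 0 < s * (u.1 * x.2 - u.2 * x.1) := by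
  have hA := urtc_scaled hN hU hd u 0 (by rwa [sub_zero])
  obtain ⟨p, q, hpq, hApq⟩ := Set.encard_eq_two.mp hA
  have hpA : p ∈ {x : ℝ × ℝ | N (u - x) = d ∧ N (0 - x) = d} := by
    rw [hApq]; exact Set.mem_insert p {q}
  obtain ⟨hup, hp0⟩ := hpA
  have hp : N p = d := by rwa [zero_sub, neg' hN] at hp0
  have hdet := det_ne hN hd hu hp hup
  have hdet2 : u.1 * (u - p).2 - u.2 * (u - p).1 = -(u.1 * p.2 - u.2 * p.1) := by
    simp only [Prod.snd_sub, Prod.fst_sub]; ring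
  rcases lt_or_gt_of_ne (mul_ne_zero hs hdet) with hneg | hpos
  · refine ⟨u - p, hup, ?_, ?_⟩
    · rwa [sub_sub_cancel]
    · rw [hdet2]; nlinarith
  · exact ⟨p, hp, hup, hpos⟩

lemma apex_unique (hN : IsNorm N) (hU : IsURTC N) {d : ℝ} (hd : 0 < d) (s : ℝ)
    {u x y : ℝ × ℝ} (hu : N u = d)
    (hx : N x = d) (hux : N (u - x) = d) (hxs : 0 < s * (u.1 * x.2 - u.2 * x.1))
    (hy : N y = d) (huy : N (u - y) = d) (hys : 0 < s * (u.1 * y.2 - u.2 * y.1)) :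
    x = y := by
  have hA := urtc_scaled hN hU hd u 0 (by rwa [sub_zero])
  obtain ⟨p, q, hpq, hApq⟩ := Set.encard_eq_two.mp hA
  have hmem : ∀ z : ℝ × ℝ, N (u - z) = d → N z = d → (z = p ∨ z = q) := by
    intro z h1 h2
    have hz : z ∈ {x : ℝ × ℝ | N (u - x) = d ∧ N (0 - x) = d} :=
      ⟨h1, by rwa [zero_sub, neg' hN]⟩
    rw [hApq] at hz
    simpa using hz
  have hxne : x ≠ u - x := by
    intro h
    have hu2 : u = x + x := (sub_eq_iff_eq_add.mp h.symm)
    rw [← two_smul ℝ x] at hu2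
    rw [hu2, hN.smul_eq, hx] at hu
    rw [abs_of_pos (by norm_num : (0:ℝ) < 2)] at hu
    -- hu : 2 * d = d... careful: N u rewritten
    linarith
  have h1 := hmem x hux hx
  have h2 := hmem (u - x) (by rwa [sub_sub_cancel]) hux
  have h3 := hmem y huy hy
  have hkey : y = x ∨ y = u - x := by
    rcases h1 with hxp | hxp
    · rcases h3 with h | h
      · left; rw [h, hxp]
      · rcases h2 with h2' | h2'
        · exact absurd (h2'.trans hxp.symm).symm hxne
        · right; rw [h, h2']
    · rcases h3 with h | h
      · rcases h2 with h2' | h2'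
        · right; rw [h, h2']
        · exact absurd (h2'.trans hxp.symm).symm hxne
      · left; rw [h, hxp]
  rcases hkey with h | h
  · exact h.symm
  · exfalso
    rw [h] at hys
    have hdet2 : u.1 * (u - x).2 - u.2 * (u - x).1 = -(u.1 * x.2 - u.2 * x.1) := by
      simp only [Prod.snd_sub, Prod.fst_sub]; ring
    rw [hdet2] at hys
    nlinarith

end ProbeAux

/-- For a URTC-norm, any triple `(0, b₁, b₂)` in regular `d`-position extends to a
`d`-probe `(0, b₁, b₂, b₁ + b₂, c₁, c₂, c₃)`. -/
theorem exists_probe (N : ℝ × ℝ → ℝ) (hN : IsNorm N) (hU : IsURTC N)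
    (d : ℝ) (hd : 0 < d) (b₁ b₂ : ℝ × ℝ)
    (h1 : N b₁ = d) (h2 : N b₂ = d) (h12 : N (b₁ - b₂) = d) :
    ∃ c₁ c₂ c₃ : ℝ × ℝ, IsProbe N d 0 b₁ b₂ (b₁ + b₂) c₁ c₂ c₃ := by
  classical
  obtain ⟨c, hc, hlow⟩ := ProbeAux.lower' hN
  have hNcont := ProbeAux.cont' hN
  have hneg := ProbeAux.neg' hN
  set s : ℝ := b₁.1 * b₂.2 - b₁.2 * b₂.1 with hs_def
  have hs : s ≠ 0 := ProbeAux.det_ne hN hd h1 h2 h12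
  set T : Set ((ℝ × ℝ) × (ℝ × ℝ)) :=
    {p | N p.1 = d ∧ N p.2 = d ∧ N (p.1 - p.2) = d ∧
      0 < s * (p.1.1 * p.2.2 - p.1.2 * p.2.1)} with hT_def
  set S : Set (ℝ × ℝ) := {x | N x = d} with hS_def
  -- T is compact
  have hdetcont : Continuous fun p : (ℝ × ℝ) × (ℝ × ℝ) =>
      s * (p.1.1 * p.2.2 - p.1.2 * p.2.1) := by fun_prop
  have hTalt : T = {p | N p.1 = d ∧ N p.2 = d ∧ N (p.1 - p.2) = d ∧
      0 ≤ s * (p.1.1 * p.2.2 - p.1.2 * p.2.1)} := by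
    ext p
    constructor
    · rintro ⟨ha, hb, hab, hpos⟩; exact ⟨ha, hb, hab, le_of_lt hpos⟩
    · rintro ⟨ha, hb, hab, hnn⟩
      refine ⟨ha, hb, hab, lt_of_le_of_ne hnn ?_⟩
      intro hcon
      exact (mul_ne_zero hs (ProbeAux.det_ne hN hd ha hb hab)) hcon.symm
  have hclosed : IsClosed T := by
    rw [hTalt]
    have e1 : IsClosed {p : (ℝ × ℝ) × (ℝ × ℝ) | N p.1 = d} :=
      isClosed_eq (hNcont.comp continuous_fst) continuous_const
    have e2 : IsClosed {p : (ℝ × ℝ) × (ℝ × ℝ) | N p.2 = d} :=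
      isClosed_eq (hNcont.comp continuous_snd) continuous_const
    have e3 : IsClosed {p : (ℝ × ℝ) × (ℝ × ℝ) | N (p.1 - p.2) = d} :=
      isClosed_eq (hNcont.comp (continuous_fst.sub continuous_snd)) continuous_const
    have e4 : IsClosed {p : (ℝ × ℝ) × (ℝ × ℝ) |
        0 ≤ s * (p.1.1 * p.2.2 - p.1.2 * p.2.1)} :=
      isClosed_le continuous_const hdetcont
    exact e1.inter (e2.inter (e3.inter e4))
  have hbdd : T ⊆ Metric.closedBall 0 (d / c) := by
    rintro p ⟨hp1, hp2, -, -⟩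
    rw [Metric.mem_closedBall, dist_zero_right]
    have hb1 : ‖p.1‖ ≤ d / c := by
      rw [le_div_iff₀ hc]
      have := hlow p.1
      rw [hp1] at this
      linarith
    have hb2 : ‖p.2‖ ≤ d / c := by
      rw [le_div_iff₀ hc]
      have := hlow p.2
      rw [hp2] at this
      linarith
    rw [Prod.norm_def]
    exact max_le hb1 hb2
  have hTcomp : IsCompact T :=
    (isCompact_closedBall (0 : (ℝ × ℝ) × (ℝ × ℝ)) (d / c)).of_isClosed_subset hclosed hbdd
  -- S is connected
  have hrank : 1 < Module.rank ℝ (ℝ × ℝ) := by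
    rw [rank_prod, Module.rank_self, Cardinal.lift_one, one_add_one_eq_two]
    exact Cardinal.one_lt_two
  have hSconn : IsConnected S := by
    have hsph : IsConnected (Metric.sphere (0 : ℝ × ℝ) 1) :=
      isConnected_sphere hrank 0 zero_le_one
    have himg : S = (fun x : ℝ × ℝ => (d / N x) • x) '' Metric.sphere 0 1 := by
      ext y
      simp only [Set.mem_image, hS_def, Set.mem_setOf_eq]
      constructor
      · intro hy
        have hy0 : y ≠ 0 := by
          intro h; rw [h, ProbeAux.zero' hN] at hy; exact (ne_of_gt hd) hy.symm
        have hyn : (0 : ℝ) < ‖y‖ := norm_pos_iff.mpr hy0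
        refine ⟨‖y‖⁻¹ • y, ?_, ?_⟩
        · rw [mem_sphere_zero_iff_norm, norm_smul, norm_inv, norm_norm,
            inv_mul_cancel₀ (ne_of_gt hyn)]
        · have hNx : N (‖y‖⁻¹ • y) = ‖y‖⁻¹ * d := by
            rw [hN.smul_eq, abs_of_pos (inv_pos.mpr hyn), hy]
          rw [hNx, smul_smul]
          have hconv : d / (‖y‖⁻¹ * d) * ‖y‖⁻¹ = 1 := by
            field_simp
          rw [hconv, one_smul]
      · rintro ⟨x, hx, rfl⟩
        have hx1 : ‖x‖ = 1 := mem_sphere_zero_iff_norm.mp hx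
        have hx0 : x ≠ 0 := by intro h; rw [h] at hx1; simp at hx1
        have hNx : 0 < N x :=
          lt_of_le_of_ne (ProbeAux.nonneg' hN x) fun h => hx0 (hN.eq_zero_of x h.symm)
        rw [hN.smul_eq, abs_of_pos (div_pos hd hNx), div_mul_cancel₀ _ (ne_of_gt hNx)]
    rw [himg]
    apply hsph.image
    apply ContinuousOn.fun_smul
    · apply ContinuousOn.div continuousOn_const hNcont.continuousOn
      intro x hx
      have hx1 : ‖x‖ = 1 := mem_sphere_zero_iff_norm.mp hx
      have hx0 : x ≠ 0 := by intro h; rw [h] at hx1; simp at hx1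
      exact fun h => hx0 (hN.eq_zero_of x h)
    · exact continuousOn_id
  -- bijection between T and S
  have hsurj : ∀ u : ℝ × ℝ, N u = d → ∃ x, ((u, x) : (ℝ × ℝ) × (ℝ × ℝ)) ∈ T := by
    intro u hu
    obtain ⟨x, hx1, hx2, hx3⟩ := ProbeAux.apex_exists hN hU hd s hs hu
    exact ⟨x, hu, hx1, hx2, hx3⟩
  have huniq : ∀ u x y : ℝ × ℝ, ((u, x) : (ℝ × ℝ) × (ℝ × ℝ)) ∈ T →
      ((u, y) : (ℝ × ℝ) × (ℝ × ℝ)) ∈ T → x = y := by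
    rintro u x y ⟨hu, hx, hux, hxs⟩ ⟨-, hy, huy, hys⟩
    exact ProbeAux.apex_unique hN hU hd s hu hx hux hxs hy huy hys
  let F : ↥T → ↥S := fun p => ⟨p.val.1, p.prop.1⟩
  have hFbij : Function.Bijective F := by
    constructor
    · rintro ⟨⟨u, x⟩, hux⟩ ⟨⟨v, y⟩, hvy⟩ hEq
      simp only [F, Subtype.mk.injEq] at hEq
      subst hEq
      have := huniq u x y hux hvy
      simp [this]
    · rintro ⟨u, hu⟩
      obtain ⟨x, hx⟩ := hsurj u hu
      exact ⟨⟨(u, x), hx⟩, rfl⟩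
  let e : ↥T ≃ ↥S := Equiv.ofBijective F hFbij
  haveI : CompactSpace ↥T := isCompact_iff_compactSpace.mp hTcomp
  have hFcont : Continuous F :=
    Continuous.subtype_mk (continuous_fst.comp continuous_subtype_val) _
  have hecont : Continuous e := hFcont
  haveI : ConnectedSpace ↥S := Subtype.connectedSpace hSconn
  let homeo := hecont.homeoOfEquivCompactToT2
  haveI hTcs : ConnectedSpace ↥T :=
    homeo.symm.surjective.connectedSpace homeo.symm.continuous
  have hTconn : IsConnected T := isConnected_iff_connectedSpace.mpr hTcs
  -- intermediate value theorem
  set h : (ℝ × ℝ) × (ℝ × ℝ) → ℝ := fun p => N (b₁ + b₂ - p.1 - p.2) with hh_def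
  have hhcont : ContinuousOn h T :=
    (hNcont.comp ((continuous_const.sub continuous_fst).sub continuous_snd)).continuousOn
  have hmem1 : ((b₁, b₂) : (ℝ × ℝ) × (ℝ × ℝ)) ∈ T :=
    ⟨h1, h2, h12, mul_self_pos.mpr hs⟩
  have hmem2 : ((-b₁, -b₂) : (ℝ × ℝ) × (ℝ × ℝ)) ∈ T := by
    refine ⟨by rw [hneg]; exact h1, by rw [hneg]; exact h2, ?_, ?_⟩
    · rw [neg_sub_neg, ← hneg (b₂ - b₁), neg_sub]
      exact h12
    · have : (-b₁ : ℝ × ℝ).1 * (-b₂ : ℝ × ℝ).2 - (-b₁ : ℝ × ℝ).2 * (-b₂ : ℝ × ℝ).1 = s := by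
        simp only [Prod.fst_neg, Prod.snd_neg, hs_def]
        ring
      rw [this]
      exact mul_self_pos.mpr hs
  have hb3 : d ≤ N (b₁ + b₂) := by
    have h2b : N ((2 : ℝ) • b₁) = 2 * d := by
      rw [hN.smul_eq, h1, abs_of_pos (by norm_num : (0:ℝ) < 2)]
    have hsplit : (2 : ℝ) • b₁ = (b₁ + b₂) + (b₁ - b₂) := by
      rw [two_smul]; abel
    have htr := hN.add_le (b₁ + b₂) (b₁ - b₂)
    rw [← hsplit, h2b, h12] at htr
    linarith
  have hval1 : h (b₁, b₂) = 0 := by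
    have harg : b₁ + b₂ - (b₁, b₂).1 - (b₁, b₂).2 = 0 := by
      show b₁ + b₂ - b₁ - b₂ = 0
      abel
    rw [hh_def]
    simp only [harg]
    exact ProbeAux.zero' hN
  have hval2 : 2 * d ≤ h (-b₁, -b₂) := by
    have harg : b₁ + b₂ - (-b₁, -b₂).1 - (-b₁, -b₂).2 = (2 : ℝ) • (b₁ + b₂) := by
      show b₁ + b₂ - -b₁ - -b₂ = (2 : ℝ) • (b₁ + b₂)
      rw [two_smul]; abel
    rw [hh_def]
    simp only [harg]
    rw [hN.smul_eq, abs_of_pos (by norm_num : (0:ℝ) < 2)]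
    linarith
  have hIcc : d ∈ Set.Icc (h (b₁, b₂)) (h (-b₁, -b₂)) := by
    rw [hval1]
    exact ⟨le_of_lt hd, by linarith⟩
  obtain ⟨p, hpT, hpval⟩ :=
    (hTconn.isPreconnected.intermediate_value hmem1 hmem2 hhcont) hIcc
  obtain ⟨hp1, hp2, hp12, -⟩ := hpT
  refine ⟨p.1, p.2, p.1 + p.2, ?_⟩
  unfold IsProbe
  refine ⟨?_, ?_, h12, ?_, ?_, ?_, ?_, hp12, ?_, ?_, ?_⟩
  · rw [zero_sub, hneg]; exact h1
  · rw [zero_sub, hneg]; exact h2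
  · have : b₁ - (b₁ + b₂) = -b₂ := by abel
    rw [this, hneg]; exact h2
  · have : b₂ - (b₁ + b₂) = -b₁ := by abel
    rw [this, hneg]; exact h1
  · rw [zero_sub, hneg]; exact hp1
  · rw [zero_sub, hneg]; exact hp2
  · have : p.1 - (p.1 + p.2) = -p.2 := by abel
    rw [this, hneg]; exact hp2
  · have : p.2 - (p.1 + p.2) = -p.1 := by abel
    rw [this, hneg]; exact hp1
  · have : b₁ + b₂ - (p.1 + p.2) = b₁ + b₂ - p.1 - p.2 := by abel
    rw [this]
    exact hpval
end

section
/- Let ‖·‖ be a URTC-norm on ℝ², let d > 0, and let b₁, b₂ ∈ ℝ² satisfy ‖b₁‖ = ‖b₂‖ = ‖b₁ − b₂‖ = d. If (0, b₁, b₂, b₃, c₁, c₂, c₃) is a d-probe, then necessarily b₃ = b₁ + b₂; in particular b₃ ≠ 0. -/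
lemma myN_zero (N : ℝ × ℝ → ℝ) (hN : IsNorm N) : N 0 = 0 := by
  have := hN.smul_eq 0 0
  simpa using this

lemma myN_neg (N : ℝ × ℝ → ℝ) (hN : IsNorm N) (x : ℝ × ℝ) : N (-x) = N x := by
  have := hN.smul_eq (-1) x
  simpa using this

lemma circle_encard (N : ℝ × ℝ → ℝ) (hN : IsNorm N) (hU : IsURTC N)
    (d : ℝ) (hd : 0 < d) (p q : ℝ × ℝ) (hpq : N (p - q) = d) :
    {x : ℝ × ℝ | N (p - x) = d ∧ N (q - x) = d}.encard = 2 := by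
  have hd0 : d ≠ 0 := ne_of_gt hd
  set a := d⁻¹ • p with ha
  set b := d⁻¹ • q with hb
  have hab : N (a - b) = 1 := by
    rw [ha, hb, ← smul_sub, hN.smul_eq, hpq, abs_of_pos (inv_pos.2 hd)]
    field_simp
  have hT := hU a b hab
  have himg : {x : ℝ × ℝ | N (p - x) = d ∧ N (q - x) = d} =
      (fun x => d • x) '' {x : ℝ × ℝ | N (a - x) = 1 ∧ N (b - x) = 1} := by
    ext y
    simp only [Set.mem_setOf_eq, Set.mem_image]
    constructor
    · rintro ⟨h1, h2⟩
      refine ⟨d⁻¹ • y, ⟨?_, ?_⟩, ?_⟩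
      · rw [ha, ← smul_sub, hN.smul_eq, abs_of_pos (inv_pos.2 hd), h1]
        field_simp
      · rw [hb, ← smul_sub, hN.smul_eq, abs_of_pos (inv_pos.2 hd), h2]
        field_simp
      · rw [smul_smul]; field_simp; rw [one_smul]
    · rintro ⟨x, ⟨h1, h2⟩, rfl⟩
      constructor
      · have : p - d • x = d • (a - x) := by
          rw [ha, smul_sub, smul_smul]; field_simp; rw [one_smul]
        rw [this, hN.smul_eq, abs_of_pos hd, h1, mul_one]
      · have : q - d • x = d • (b - x) := by
          rw [hb, smul_sub, smul_smul]; field_simp; rw [one_smul]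
        rw [this, hN.smul_eq, abs_of_pos hd, h2, mul_one]
  rw [himg, Set.InjOn.encard_image, hT]
  intro u _ v _ h
  exact smul_right_injective _ hd0 h

lemma circle_pair (N : ℝ × ℝ → ℝ) (hN : IsNorm N) (hU : IsURTC N)
    (d : ℝ) (hd : 0 < d) (p q u v : ℝ × ℝ) (hpq : N (p - q) = d)
    (hu : N (p - u) = d ∧ N (q - u) = d) (hv : N (p - v) = d ∧ N (q - v) = d)
    (huv : u ≠ v) :
    {x : ℝ × ℝ | N (p - x) = d ∧ N (q - x) = d} = {u, v} := by
  have h2 := circle_encard N hN hU d hd p q hpq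
  obtain ⟨x, y, hxy, hS⟩ := Set.encard_eq_two.1 h2
  have hu' : u ∈ ({x, y} : Set (ℝ × ℝ)) := by rw [← hS]; exact hu
  have hv' : v ∈ ({x, y} : Set (ℝ × ℝ)) := by rw [← hS]; exact hv
  have hu2 : u = x ∨ u = y := by simpa using hu'
  have hv2 : v = x ∨ v = y := by simpa using hv'
  rw [hS]
  rcases hu2 with rfl | rfl <;> rcases hv2 with rfl | rfl
  · exact absurd rfl huv
  · rfl
  · exact (Set.pair_comm _ _)
  · exact absurd rfl huv

/-- For a URTC-norm, in any `d`-probe `(0, b₁, b₂, b₃, c₁, c₂, c₃)` with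
`N b₁ = N b₂ = N (b₁ - b₂) = d`, necessarily `b₃ = b₁ + b₂`; in particular `b₃ ≠ 0`. -/
theorem probe_fourth_point (N : ℝ × ℝ → ℝ) (hN : IsNorm N) (hU : IsURTC N)
    (d : ℝ) (hd : 0 < d) (b₁ b₂ b₃ c₁ c₂ c₃ : ℝ × ℝ)
    (h1 : N b₁ = d) (h2 : N b₂ = d) (h12 : N (b₁ - b₂) = d)
    (hp : IsProbe N d 0 b₁ b₂ b₃ c₁ c₂ c₃) :
    b₃ = b₁ + b₂ ∧ b₃ ≠ 0 := by
  obtain ⟨hpb1, hpb2, hpb12, hb13, hb23, hc1, hc2, hc12, hc13, hc23, hb3c3⟩ := hp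
  have hd0 : d ≠ 0 := ne_of_gt hd
  have hNc1 : N c₁ = d := by rw [← myN_neg N hN]; simpa using hc1
  have hNc2 : N c₂ = d := by rw [← myN_neg N hN]; simpa using hc2
  -- b₁ + b₂ ≠ 0
  have hsum_ne : b₁ + b₂ ≠ 0 := by
    intro h
    have hb2 : b₂ = -b₁ := by linear_combination (norm := module) h
    rw [hb2, sub_neg_eq_add, ← two_smul ℝ, hN.smul_eq] at h12
    rw [h1] at h12
    norm_num at h12
    linarith
  -- b₃ ∈ {0, b₁+b₂}
  have hSb : {x : ℝ × ℝ | N (b₁ - x) = d ∧ N (b₂ - x) = d} = {0, b₁ + b₂} := by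
    apply circle_pair N hN hU d hd b₁ b₂ 0 (b₁ + b₂) h12
    · constructor <;> simpa
    · constructor
      · have : b₁ - (b₁ + b₂) = -b₂ := by ring
        rw [this, myN_neg N hN, h2]
      · have : b₂ - (b₁ + b₂) = -b₁ := by ring
        rw [this, myN_neg N hN, h1]
    · exact fun h => hsum_ne h.symm
  have hb3mem : b₃ ∈ ({0, b₁ + b₂} : Set (ℝ × ℝ)) := by
    rw [← hSb]; exact ⟨hb13, hb23⟩
  have hb3 : b₃ = 0 ∨ b₃ = b₁ + b₂ := by simpa using hb3mem
  -- rule out b₃ = 0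
  have hb3ne : b₃ ≠ 0 := by
    rintro rfl
    -- then c₃ = c₁ + c₂ and N (c₁ + c₂) = d
    have hc1ne : c₁ ≠ 0 := by
      intro h; rw [h, myN_zero N hN] at hNc1; exact hd0 hNc1.symm
    have hc2ne : c₂ ≠ 0 := by
      intro h; rw [h, myN_zero N hN] at hNc2; exact hd0 hNc2.symm
    have hcsum_ne : c₁ + c₂ ≠ 0 := by
      intro h
      have hc2' : c₂ = -c₁ := by linear_combination (norm := module) h
      rw [hc2', sub_neg_eq_add, ← two_smul ℝ, hN.smul_eq, hNc1] at hc12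
      norm_num at hc12
      linarith
    have hSc : {x : ℝ × ℝ | N (c₁ - x) = d ∧ N (c₂ - x) = d} = {0, c₁ + c₂} := by
      apply circle_pair N hN hU d hd c₁ c₂ 0 (c₁ + c₂) hc12
      · constructor <;> simpa
      · constructor
        · have : c₁ - (c₁ + c₂) = -c₂ := by ring
          rw [this, myN_neg N hN, hNc2]
        · have : c₂ - (c₁ + c₂) = -c₁ := by ring
          rw [this, myN_neg N hN, hNc1]
      · exact fun h => hcsum_ne h.symm
    have hc3mem : c₃ ∈ ({0, c₁ + c₂} : Set (ℝ × ℝ)) := by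
      rw [← hSc]; exact ⟨hc13, hc23⟩
    have hc3ne : c₃ ≠ 0 := by
      intro h
      rw [h, sub_zero, myN_zero N hN] at hb3c3
      exact hd0 hb3c3.symm
    have hc3 : c₃ = c₁ + c₂ := by
      rcases (by simpa using hc3mem : c₃ = 0 ∨ c₃ = c₁ + c₂) with h | h
      · exact absurd h hc3ne
      · exact h
    have hNsum : N (c₁ + c₂) = d := by
      rw [hc3] at hb3c3
      rw [← myN_neg N hN]
      simpa using hb3c3
    -- the circle for (0, c₁) is {c₂, c₁ - c₂}, but c₁ + c₂ is also on it
    have hc1_2 : c₁ ≠ (2:ℝ) • c₂ := by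
      intro h
      rw [h, hN.smul_eq] at hNc1
      norm_num [hNc2] at hNc1
      linarith
    have hS0 : {x : ℝ × ℝ | N (0 - x) = d ∧ N (c₁ - x) = d} = {c₂, c₁ - c₂} := by
      apply circle_pair N hN hU d hd 0 c₁ c₂ (c₁ - c₂) hc1
      · constructor
        · rw [zero_sub, myN_neg N hN, hNc2]
        · exact hc12
      · constructor
        · rw [zero_sub, myN_neg N hN, hc12]
        · have : c₁ - (c₁ - c₂) = c₂ := by ring
          rw [this, hNc2]
      · intro h
        apply hc1_2
        have : c₁ = (2:ℝ) • c₂ := by linear_combination (norm := module) -h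
        exact this
    have hmem : c₁ + c₂ ∈ ({c₂, c₁ - c₂} : Set (ℝ × ℝ)) := by
      rw [← hS0]
      constructor
      · rw [zero_sub, myN_neg N hN, hNsum]
      · have : c₁ - (c₁ + c₂) = -c₂ := by ring
        rw [this, myN_neg N hN, hNc2]
    rcases (by simpa using hmem : c₁ + c₂ = c₂ ∨ c₁ + c₂ = c₁ - c₂) with h | h
    · apply hc1ne; linear_combination (norm := module) h
    · apply hc2ne
      have : (2 : ℝ) • c₂ = 0 := by linear_combination (norm := module) h
      have h2' := congrArg (fun v => (2⁻¹ : ℝ) • v) this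
      simpa [smul_smul] using h2'
  rcases hb3 with h | h
  · exact absurd h hb3ne
  · exact ⟨h, hb3ne⟩
end
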